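/- arXiv:1606.08976 — 8 statements merged into one kernel-verified Lean document; each statement's English description precedes it below -/
import Mathlib

section
/- Let B be a 1-symmetric convex body in ℝⁿ (n ≥ 2) and x = (x₁,…,xₙ) ∈ ∂B. If |xᵢ| > |xⱼ| for some indices i, j ≤ n, then |vᵢ| ≥ |vⱼ| for every v = (v₁,…,vₙ) in the Gauss image G(B,x). -/
open scoped BigOperators

/-- A 1-symmetric convex body: a compact convex set with nonempty interior that is
invariant under coordinate sign changes and coordinate permutations. -/
def IsSymBody (n : ℕ) (B : Set (Fin n → ℝ)) : Prop :=
  IsCompact B ∧ Convex ℝ B ∧ (interior B).Nonempty ∧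
    ∀ x ∈ B, ∀ ε : Fin n → ℝ, (∀ i, ε i = 1 ∨ ε i = -1) →
      ∀ σ : Equiv.Perm (Fin n), (fun i => ε i * x (σ i)) ∈ B

/-- The Gauss image of `B` at `x`: the set of unit outer normal vectors at `x`. -/
def gaussImage {n : ℕ} (B : Set (Fin n → ℝ)) (x : Fin n → ℝ) : Set (Fin n → ℝ) :=
  {v | (∑ i, (v i) ^ 2 = 1) ∧ ∀ y ∈ B, (∑ i, v i * (y i - x i)) ≤ 0}

/-- The boundary point `x` of `B` is illuminated in direction `y`. -/
def Illuminates {n : ℕ} (y x : Fin n → ℝ) (B : Set (Fin n → ℝ)) : Prop :=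
  ∃ ε : ℝ, 0 < ε ∧ x + ε • y ∈ interior B

theorem statement_3 (n : ℕ) (hn : 2 ≤ n) (B : Set (Fin n → ℝ)) (hB : IsSymBody n B)
    (x : Fin n → ℝ) (hx : x ∈ frontier B) (i j : Fin n) (hij : |x j| < |x i|) :
    ∀ v ∈ gaussImage B x, |v j| ≤ |v i| := by
  intro v hv
  obtain ⟨hv1, hv2⟩ := hv
  have hne : i ≠ j := by rintro rfl; exact absurd hij (lt_irrefl _)
  have hxB : x ∈ B := by
    have hcl : IsClosed B := hB.1.isClosed
    have := frontier_subset_closure (s := B) hx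
    rwa [hcl.closure_eq] at this
  set σ := Equiv.swap i j with hσ
  set ε : Fin n → ℝ := fun k => if 0 ≤ v k * x (σ k) then 1 else -1 with hεdef
  have hε : ∀ k, ε k = 1 ∨ ε k = -1 := by
    intro k; simp only [hεdef]; split <;> simp
  have hyB : (fun k => ε k * x (σ k)) ∈ B := hB.2.2.2 x hxB ε hε σ
  have key := hv2 _ hyB
  have habs : ∀ k, v k * (ε k * x (σ k)) = |v k| * |x (σ k)| := by
    intro k
    simp only [hεdef]
    rw [← abs_mul]
    split
    · rw [abs_of_nonneg (by assumption)]; ring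
    · rw [abs_of_neg (lt_of_not_ge (by assumption))]; ring
  have hterm : ∀ k ∈ Finset.univ,
      |v k| * |x (σ k)| - |v k| * |x k| ≤ v k * ((ε k * x (σ k)) - x k) := by
    intro k _
    rw [mul_sub, habs k]
    have : v k * x k ≤ |v k| * |x k| := by
      rw [← abs_mul]; exact le_abs_self _
    linarith
  have hsum : ∑ k, (|v k| * |x (σ k)| - |v k| * |x k|) ≤ 0 :=
    le_trans (Finset.sum_le_sum hterm) key
  have hzero : ∀ k ∈ Finset.univ, k ∉ ({i, j} : Finset (Fin n)) →
      |v k| * |x (σ k)| - |v k| * |x k| = 0 := by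
    intro k _ hk
    simp only [Finset.mem_insert, Finset.mem_singleton, not_or] at hk
    rw [hσ, Equiv.swap_apply_of_ne_of_ne hk.1 hk.2]
    ring
  have hsum2 : ∑ k ∈ ({i, j} : Finset (Fin n)), (|v k| * |x (σ k)| - |v k| * |x k|)
      = ∑ k, (|v k| * |x (σ k)| - |v k| * |x k|) :=
    Finset.sum_subset (Finset.subset_univ _) hzero
  rw [Finset.sum_pair hne] at hsum2
  have hσi : σ i = j := Equiv.swap_apply_left i j
  have hσj : σ j = i := Equiv.swap_apply_right i j
  rw [hσi, hσj] at hsum2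
  have hfin : |v i| * |x j| - |v i| * |x i| + (|v j| * |x i| - |v j| * |x j|) ≤ 0 := by
    rw [hsum2]; exact hsum
  nlinarith [abs_nonneg (v i), abs_nonneg (v j)]
end

section
/- Let B be a 1-symmetric convex body in ℝⁿ (n ≥ 2) with 0 in its interior, let x ∈ ∂B, and let y ∈ {−1,0,1}ⁿ satisfy: (1) every coordinate where y vanishes is a coordinate where x vanishes, and (2) yᵢ = −sign(xᵢ) whenever xᵢ ≠ 0. If x is not illuminated in direction y, then ‖∑_{i : yᵢ ≠ 0} eᵢ‖_B ≥ 2/‖x‖_∞, where ‖·‖_B is the Minkowski functional of B. -/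
open scoped BigOperators

lemma symBody_mul_mem {n : ℕ} {B : Set (Fin n → ℝ)} (hconv : Convex ℝ B)
    (hsym : ∀ x ∈ B, ∀ ε : Fin n → ℝ, (∀ i, ε i = 1 ∨ ε i = -1) →
      ∀ σ : Equiv.Perm (Fin n), (fun i => ε i * x (σ i)) ∈ B)
    {v : Fin n → ℝ} (hv : v ∈ B) (t : Fin n → ℝ) (ht : ∀ i, |t i| ≤ 1) :
    (fun i => t i * v i) ∈ B := by
  suffices H : ∀ (T : Finset (Fin n)) (t : Fin n → ℝ), (∀ i, |t i| ≤ 1) →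
      (∀ i ∉ T, t i = 1 ∨ t i = -1) → (fun i => t i * v i) ∈ B by
    exact H Finset.univ t ht (fun i hi => absurd (Finset.mem_univ i) hi)
  intro T
  induction T using Finset.induction_on with
  | empty =>
    intro t ht hsgn
    simpa using hsym v hv t (fun i => hsgn i (by simp)) 1
  | @insert j T hj IH =>
    intro t ht hsgn
    set t1 := Function.update t j 1 with ht1
    set t2 := Function.update t j (-1) with ht2
    have m1 : (fun i => t1 i * v i) ∈ B := by
      refine IH t1 ?_ ?_
      · intro i
        by_cases h : i = j
        · subst h; simp [ht1]
        · simpa [ht1, Function.update_of_ne h] using ht i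
      · intro i hi
        by_cases h : i = j
        · subst h; simp [ht1]
        · rw [ht1, Function.update_of_ne h]
          exact hsgn i (by simp [h, hi])
    have m2 : (fun i => t2 i * v i) ∈ B := by
      refine IH t2 ?_ ?_
      · intro i
        by_cases h : i = j
        · subst h; simp [ht2]
        · simpa [ht2, Function.update_of_ne h] using ht i
      · intro i hi
        by_cases h : i = j
        · subst h; simp [ht2]
        · rw [ht2, Function.update_of_ne h]
          exact hsgn i (by simp [h, hi])
    have habs := abs_le.1 (ht j)
    have key := hconv m1 m2 (a := (1 + t j)/2) (b := (1 - t j)/2)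
      (by linarith [habs.1]) (by linarith [habs.2]) (by ring)
    convert key using 1
    funext i
    by_cases h : i = j
    · subst h
      simp only [Pi.add_apply, Pi.smul_apply, smul_eq_mul, ht1, ht2,
        Function.update_self]
      ring
    · simp only [Pi.add_apply, Pi.smul_apply, smul_eq_mul, ht1, ht2,
        Function.update_of_ne h]
      ring

lemma symBody_mem_of_abs_le {n : ℕ} {B : Set (Fin n → ℝ)} (hconv : Convex ℝ B)
    (hsym : ∀ x ∈ B, ∀ ε : Fin n → ℝ, (∀ i, ε i = 1 ∨ ε i = -1) →
      ∀ σ : Equiv.Perm (Fin n), (fun i => ε i * x (σ i)) ∈ B)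
    {u v : Fin n → ℝ} (h : ∀ i, |u i| ≤ |v i|) (hv : v ∈ B) : u ∈ B := by
  have := symBody_mul_mem hconv hsym hv (fun i => if v i = 0 then 0 else u i / v i) ?_
  · convert this using 1
    funext i
    by_cases hvi : v i = 0
    · have : |u i| ≤ 0 := by simpa [hvi] using h i
      have : u i = 0 := abs_eq_zero.1 (le_antisymm ‹|u i| ≤ 0› (abs_nonneg _))
      simp [hvi, this]
    · simp [hvi, div_mul_cancel₀ _ hvi]
  · intro i
    by_cases hvi : v i = 0
    · simp [hvi]
    · simp only [hvi, if_false]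
      rw [abs_div, div_le_one (abs_pos.2 hvi)]
      exact h i

lemma symBody_gauge_mono {n : ℕ} {B : Set (Fin n → ℝ)} (hconv : Convex ℝ B)
    (hsym : ∀ x ∈ B, ∀ ε : Fin n → ℝ, (∀ i, ε i = 1 ∨ ε i = -1) →
      ∀ σ : Equiv.Perm (Fin n), (fun i => ε i * x (σ i)) ∈ B)
    (h0 : (0 : Fin n → ℝ) ∈ interior B)
    {u v : Fin n → ℝ} (h : ∀ i, |u i| ≤ |v i|) : gauge B u ≤ gauge B v := by
  have habs : Absorbent ℝ B := absorbent_nhds_zero (mem_interior_iff_mem_nhds.1 h0)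
  refine csInf_le_csInf ⟨0, fun r hr => le_of_lt hr.1⟩ habs.gauge_set_nonempty ?_
  rintro r ⟨hr, hvr⟩
  refine ⟨hr, ?_⟩
  rw [Set.mem_smul_set_iff_inv_smul_mem₀ hr.ne'] at hvr ⊢
  refine symBody_mem_of_abs_le hconv hsym (fun i => ?_) hvr
  simp only [Pi.smul_apply, smul_eq_mul, abs_mul]
  exact mul_le_mul_of_nonneg_left (h i) (abs_nonneg _)

theorem statement_4 (n : ℕ) (hn : 2 ≤ n) (B : Set (Fin n → ℝ)) (hB : IsSymBody n B)
    (h0 : (0 : Fin n → ℝ) ∈ interior B) (x : Fin n → ℝ) (hx : x ∈ frontier B)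
    (y : Fin n → ℝ) (hy : ∀ i, y i = -1 ∨ y i = 0 ∨ y i = 1)
    (hy0 : ∀ i, y i = 0 → x i = 0)
    (hysign : ∀ i, x i ≠ 0 → y i = -Real.sign (x i))
    (hnotill : ¬ Illuminates y x B) :
    2 / ‖x‖ ≤ gauge B (∑ i ∈ Finset.univ.filter (fun i => y i ≠ 0), Pi.single i (1 : ℝ)) := by
  obtain ⟨hcomp, hconv, hint, hsym⟩ := hB
  have hclosed : IsClosed B := hcomp.isClosed
  have hnhds : B ∈ nhds (0 : Fin n → ℝ) := mem_interior_iff_mem_nhds.1 h0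
  have habs : Absorbent ℝ B := absorbent_nhds_zero hnhds
  have hxB : x ∈ B := by
    have := hx.1
    rwa [hclosed.closure_eq] at this
  have hxni : x ∉ interior B := hx.2
  have hgx : gauge B x = 1 := by
    refine le_antisymm (gauge_le_one_of_mem hxB) ?_
    by_contra h
    exact hxni ((gauge_lt_one_iff_mem_interior hconv hnhds).1 (not_le.1 h))
  set M : ℝ := ‖x‖ with hM
  have hxne : x ≠ 0 := fun h => hxni (h ▸ h0)
  have hMpos : 0 < M := norm_pos_iff.2 hxne
  have hxiM : ∀ i, |x i| ≤ M := by
    intro i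
    simpa [Real.norm_eq_abs] using norm_le_pi_norm x i
  set w : Fin n → ℝ := ∑ i ∈ Finset.univ.filter (fun i => y i ≠ 0), Pi.single i (1 : ℝ) with hw
  have hwi : ∀ i, w i = if y i ≠ 0 then 1 else 0 := by
    intro i
    rw [hw, Finset.sum_apply]
    by_cases h : y i ≠ 0
    · rw [Finset.sum_eq_single i]
      · simp [h]
      · intro j hj hji
        exact Pi.single_eq_of_ne' hji 1
      · intro hi
        simp [h] at hi
    · rw [if_neg h]
      refine Finset.sum_eq_zero fun j hj => ?_
      have hji : j ≠ i := by
        rintro rfl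
        exact h (by simpa using hj)
      exact Pi.single_eq_of_ne' hji 1
  by_contra hcon
  push_neg at hcon
  set g : ℝ := gauge B w with hg
  have hgy : gauge B y ≤ g := by
    refine symBody_gauge_mono hconv hsym h0 fun i => ?_
    rcases hy i with h | h | h <;> simp [hwi i, h]
  have hgnx : gauge B (-x) ≤ 1 := by
    rw [← hgx]
    exact symBody_gauge_mono hconv hsym h0 fun i => by simp
  refine hnotill ⟨M/4, by positivity, ?_⟩
  rw [← gauge_lt_one_iff_mem_interior hconv hnhds]
  have hdom : ∀ i, |(x + (M/4) • y) i| ≤ |((1/2 : ℝ) • (-x) + (M/4) • y) i| := by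
    intro i
    simp only [Pi.add_apply, Pi.smul_apply, Pi.neg_apply, smul_eq_mul]
    have hb := hxiM i
    have hab := abs_le.1 hb
    rcases hy i with h | h | h
    · -- y i = -1, so x i ≥ 0
      have hxi : 0 ≤ x i := by
        by_contra hlt
        push_neg at hlt
        have := hysign i (ne_of_lt hlt)
        rw [Real.sign_of_neg hlt, h] at this
        norm_num at this
      rw [h]
      have hR : |1/2 * -x i + M/4 * (-1 : ℝ)| = x i/2 + M/4 := by
        rw [abs_of_nonpos (by linarith)]; ring
      rw [hR]
      rcases abs_cases (x i + M/4 * (-1 : ℝ)) with ⟨he, _⟩ | ⟨he, _⟩ <;> rw [he] <;> linarith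
    · -- y i = 0, so x i = 0
      have := hy0 i h
      simp [h, this]
    · -- y i = 1, so x i ≤ 0
      have hxi : x i ≤ 0 := by
        by_contra hlt
        push_neg at hlt
        have := hysign i (ne_of_gt hlt)
        rw [Real.sign_of_pos hlt, h] at this
        norm_num at this
      rw [h]
      have hR : |1/2 * -x i + M/4 * (1 : ℝ)| = -x i/2 + M/4 := by
        rw [abs_of_nonneg (by linarith)]; ring
      rw [hR]
      rcases abs_cases (x i + M/4 * (1 : ℝ)) with ⟨he, _⟩ | ⟨he, _⟩ <;> rw [he] <;> linarith
  calc gauge B (x + (M/4) • y) ≤ gauge B ((1/2 : ℝ) • (-x) + (M/4) • y) :=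
        symBody_gauge_mono hconv hsym h0 hdom
    _ ≤ gauge B ((1/2 : ℝ) • (-x)) + gauge B ((M/4) • y) := gauge_add_le hconv habs _ _
    _ = (1/2) * gauge B (-x) + (M/4) * gauge B y := by
        rw [gauge_smul_of_nonneg (by norm_num : (0:ℝ) ≤ 1/2),
          gauge_smul_of_nonneg (by positivity : (0:ℝ) ≤ M/4)]
        simp [smul_eq_mul]
    _ < 1 := by
        have h1 : (M/4) * gauge B y ≤ (M/4) * g :=
          mul_le_mul_of_nonneg_left hgy (by positivity)
        have h2 : (M/4) * g < (M/4) * (2/M) :=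
          (mul_lt_mul_iff_right₀ (by positivity)).2 hcon
        have h3 : (M/4) * (2/M) = 1/2 := by
          field_simp
          ring
        nlinarith [hgnx]
end

section
/- Let B be a 1-symmetric convex body in ℝⁿ (n ≥ 2) with ‖eᵢ‖_B = 1, and suppose ‖∑_{i=1}^n eᵢ‖_B < 2 and B ≠ [−1,1]ⁿ. Then at least one of the following holds: (1) B is illuminated by the 2ⁿ − 1 directions consisting of all sign vectors (ε₁,…,εₙ) ∈ {−1,1}ⁿ having εᵢ = −1 for some i ≤ n−1, together with e₁ + e₂ + ⋯ + e_{n−1}; or (2) ‖eᵢ + eⱼ‖_B > ‖eᵢ‖_B for all i ≠ j. -/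
open scoped BigOperators

open scoped Pointwise

section Aux
variable {n : ℕ} {B : Set (Fin n → ℝ)}

/-- Monotonicity: an unconditional convex body contains every coordinatewise
abs-dominated vector. -/
lemma symBody_mem_of_abs_le_s5 (hB : IsSymBody n B) {x : Fin n → ℝ} (hx : x ∈ B)
    {y : Fin n → ℝ} (h : ∀ i, |y i| ≤ |x i|) : y ∈ B := by
  classical
  obtain ⟨-, hconv, -, hsym⟩ := hB
  suffices H : ∀ s : Finset (Fin n), ∀ y : Fin n → ℝ,
      (∀ i, |y i| ≤ |x i|) → (∀ i ∉ s, y i = x i) → y ∈ B by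
    exact H Finset.univ y h (fun i hi => absurd (Finset.mem_univ i) hi)
  intro s
  induction s using Finset.induction with
  | empty =>
    intro y hy hout
    have : y = x := funext fun i => hout i (by simp)
    rwa [this]
  | @insert a s ha ih =>
    intro y hy hout
    set y₁ : Fin n → ℝ := Function.update y a (x a) with hy₁def
    have hy₁B : y₁ ∈ B := by
      refine ih y₁ (fun i => ?_) (fun i hi => ?_)
      · by_cases hia : i = a
        · subst hia; simp [y₁]
        · simp [y₁, Function.update_of_ne hia, hy i]
      · by_cases hia : i = a
        · subst hia; simp [y₁]
        · have : i ∉ insert a s := by simp [hia, hi]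
          simp [y₁, Function.update_of_ne hia, hout i this]
    -- flip coordinate a
    set ε : Fin n → ℝ := fun i => if i = a then -1 else 1 with hεdef
    have hy₂B : (fun i => ε i * y₁ (Equiv.refl (Fin n) i)) ∈ B :=
      hsym y₁ hy₁B ε (fun i => by by_cases hia : i = a <;> simp [ε, hia]) (Equiv.refl _)
    set y₂ : Fin n → ℝ := fun i => ε i * y₁ (Equiv.refl (Fin n) i) with hy₂def
    set t : ℝ := if x a = 0 then 1 else (y a / x a + 1) / 2 with htdef
    have ht0 : 0 ≤ t := by
      by_cases hxa : x a = 0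
      · simp [t, hxa]
      · have : |y a / x a| ≤ 1 := by
          rw [abs_div]
          exact div_le_one_of_le₀ (hy a) (abs_nonneg _)
        have := abs_le.1 this
        simp only [t, hxa, if_false]
        linarith [this.1]
    have ht1 : t ≤ 1 := by
      by_cases hxa : x a = 0
      · simp [t, hxa]
      · have : |y a / x a| ≤ 1 := by
          rw [abs_div]
          exact div_le_one_of_le₀ (hy a) (abs_nonneg _)
        have := abs_le.1 this
        simp only [t, hxa, if_false]
        linarith [this.2]
    have hcombo : y = t • y₁ + (1 - t) • y₂ := by
      funext i
      by_cases hia : i = a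
      · subst hia
        by_cases hxa : x i = 0
        · have hyi : y i = 0 := by
            have := hy i; rw [hxa, abs_zero] at this
            exact abs_nonpos_iff.mp this
          simp [t, hxa, y₂, y₁, ε, hyi]
        · have hy₁a : y₁ i = x i := by simp [y₁]
          have hy₂a : y₂ i = -(x i) := by simp [y₂, ε, hy₁a]
          simp only [Pi.add_apply, Pi.smul_apply, smul_eq_mul, hy₁a, hy₂a, t, hxa, if_false]
          field_simp
          ring
      · have hy₁i : y₁ i = y i := by simp [y₁, Function.update_of_ne hia]
        have hy₂i : y₂ i = y i := by simp [y₂, ε, hia, hy₁i]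
        simp only [Pi.add_apply, Pi.smul_apply, smul_eq_mul, hy₁i, hy₂i]
        ring
    rw [hcombo]
    exact hconv hy₁B hy₂B ht0 (by linarith) (by ring)

/-- Open box criterion for interior membership. -/
lemma symBody_mem_interior_of_abs_lt (hB : IsSymBody n B) {w z : Fin n → ℝ}
    (hw : w ∈ B) (h : ∀ i, |z i| < w i) : z ∈ interior B := by
  have hopen : IsOpen {v : Fin n → ℝ | ∀ i, |v i| < w i} := by
    have : {v : Fin n → ℝ | ∀ i, |v i| < w i} = ⋂ i, {v : Fin n → ℝ | |v i| < w i} := by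
      ext v; simp
    rw [this]
    exact isOpen_iInter_of_finite fun i =>
      isOpen_lt ((continuous_apply i).abs) continuous_const
  have hsub : {v : Fin n → ℝ | ∀ i, |v i| < w i} ⊆ B := by
    intro v hv
    refine symBody_mem_of_abs_le_s5 hB hw fun i => ?_
    have h0 : 0 ≤ w i := (abs_nonneg _).trans (h i).le
    rw [abs_of_nonneg h0]
    exact (hv i).le
  exact hopen.subset_interior_iff.mpr hsub (by exact h)

end Aux
section Aux2
variable {n : ℕ} {B : Set (Fin n → ℝ)}

lemma symBody_neg_mem (hB : IsSymBody n B) {x : Fin n → ℝ} (hx : x ∈ B) : -x ∈ B := by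
  have := hB.2.2.2 x hx (fun _ => -1) (fun i => Or.inr rfl) (Equiv.refl _)
  convert this using 1
  funext i; simp

lemma symBody_zero_mem_interior (hB : IsSymBody n B) : (0 : Fin n → ℝ) ∈ interior B := by
  obtain ⟨z, hz⟩ := hB.2.2.1
  have hnz : -z ∈ B := symBody_neg_mem hB (interior_subset hz)
  have := hB.2.1.combo_interior_self_mem_interior hz hnz (a := (1:ℝ)/2) (b := (1:ℝ)/2)
    (by norm_num) (by norm_num) (by norm_num)
  convert this using 1
  funext i; simp

lemma symBody_absorbent (hB : IsSymBody n B) : Absorbent ℝ B :=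
  absorbent_nhds_zero (mem_interior_iff_mem_nhds.mp (symBody_zero_mem_interior hB))

lemma symBody_zero_mem (hB : IsSymBody n B) : (0 : Fin n → ℝ) ∈ B :=
  interior_subset (symBody_zero_mem_interior hB)

/-- membership from gauge < 1 -/
lemma symBody_mem_of_gauge_lt_one (hB : IsSymBody n B) {x : Fin n → ℝ}
    (h : gauge B x < 1) : x ∈ B :=
  gauge_lt_one_subset_self hB.2.1 (symBody_zero_mem hB) (symBody_absorbent hB) h

/-- B is contained in the unit cube -/
lemma symBody_abs_le_one (hB : IsSymBody n B)
    (hnorm : ∀ i, gauge B (Pi.single i (1 : ℝ)) = 1)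
    {x : Fin n → ℝ} (hx : x ∈ B) (i : Fin n) : |x i| ≤ 1 := by
  by_contra hgt
  push_neg at hgt
  have hpos : (0:ℝ) < |x i| := lt_trans one_pos hgt
  have hzB : (|x i| • (Pi.single i (1:ℝ) : Fin n → ℝ)) ∈ B := by
    refine symBody_mem_of_abs_le_s5 hB hx fun k => ?_
    by_cases hk : k = i
    · subst hk; simp [Pi.single_apply, abs_of_nonneg hpos.le]
    · simp [Pi.single_apply, Ne.symm hk, abs_nonneg]
  have hmem : (Pi.single i (1:ℝ) : Fin n → ℝ) ∈ |x i|⁻¹ • B := by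
    refine ⟨(|x i| • (Pi.single i (1:ℝ) : Fin n → ℝ)), hzB, ?_⟩
    show |x i|⁻¹ • (|x i| • (Pi.single i (1:ℝ) : Fin n → ℝ)) = _
    rw [smul_smul, inv_mul_cancel₀ hpos.ne', one_smul]
  have hle := gauge_le_of_mem (inv_nonneg.mpr hpos.le) hmem
  rw [hnorm i] at hle
  have : |x i|⁻¹ < 1 := inv_lt_one_of_one_lt₀ hgt
  linarith

lemma exists_perm_two {α : Type*} [DecidableEq α] {a b c d : α}
    (hab : a ≠ b) (hcd : c ≠ d) : ∃ σ : Equiv.Perm α, σ a = c ∧ σ b = d := by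
  classical
  have h1 : Equiv.swap a c b ≠ c := by
    intro h
    have hb : b = a := (Equiv.swap a c).injective (h.trans (Equiv.swap_apply_left a c).symm)
    exact hab hb.symm
  refine ⟨(Equiv.swap a c).trans (Equiv.swap (Equiv.swap a c b) d), ?_, ?_⟩
  · simp only [Equiv.trans_apply, Equiv.swap_apply_left]
    exact Equiv.swap_apply_of_ne_of_ne (Ne.symm h1) hcd
  · simp [Equiv.trans_apply]

lemma one_vec_eq : (∑ i, Pi.single i (1 : ℝ) : Fin n → ℝ) = fun _ => 1 := by
  funext j
  rw [Finset.sum_apply]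
  simp [Pi.single_apply]

end Aux2

section Main

lemma symBody_ones_mem {n : ℕ} {B : Set (Fin n → ℝ)} (hB : IsSymBody n B)
    (hdist : gauge B (∑ i, Pi.single i (1 : ℝ)) < 2) :
    ∃ t : ℝ, 1/2 < t ∧ t ≤ 1 ∧ (fun _ => t : Fin n → ℝ) ∈ B := by
  rw [one_vec_eq] at hdist
  set C := gauge B (fun _ => (1:ℝ)) with hC
  set r := max C 1 with hr
  have hr1 : 1 ≤ r := le_max_right _ _
  have hr2 : r < 2 := max_lt hdist one_lt_two
  refine ⟨2/(r+2), ?_, ?_, ?_⟩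
  · rw [div_lt_div_iff₀ (by norm_num) (by linarith : (0:ℝ) < r + 2)]
    linarith
  · rw [div_le_one (by linarith)]; linarith
  · apply symBody_mem_of_gauge_lt_one hB
    have heq : (fun _ => 2/(r+2) : Fin n → ℝ) = (2/(r+2)) • (fun _ => (1:ℝ)) := by
      funext i; simp
    rw [heq, gauge_smul_of_nonneg (by positivity), smul_eq_mul, ← hC]
    have hCr : C ≤ r := le_max_left _ _
    have h0 : (0:ℝ) < r + 2 := by linarith
    have h1 : 2/(r+2) * C ≤ 2/(r+2) * r :=
      mul_le_mul_of_nonneg_left hCr (by positivity)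
    have h2 : 2/(r+2) * r < 1 := by
      rw [div_mul_eq_mul_div, div_lt_one h0]; linarith
    linarith

lemma symBody_flat_mem {n : ℕ} {B : Set (Fin n → ℝ)} (hB : IsSymBody n B)
    {i₀ j₀ : Fin n} (hij : i₀ ≠ j₀)
    (hflat : gauge B ((Pi.single i₀ 1 : Fin n → ℝ) + Pi.single j₀ 1) ≤ 1)
    {a b : Fin n} (hab : a ≠ b) {t : ℝ} (ht0 : 0 ≤ t) (ht1 : t < 1) :
    (t • ((Pi.single a 1 : Fin n → ℝ) + Pi.single b 1)) ∈ B := by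
  classical
  have hsB : (t • ((Pi.single i₀ 1 : Fin n → ℝ) + Pi.single j₀ 1)) ∈ B := by
    apply symBody_mem_of_gauge_lt_one hB
    rw [gauge_smul_of_nonneg ht0]
    calc t • gauge B ((Pi.single i₀ 1 : Fin n → ℝ) + Pi.single j₀ 1)
        = t * gauge B ((Pi.single i₀ 1 : Fin n → ℝ) + Pi.single j₀ 1) := by simp [smul_eq_mul]
    _ ≤ t * 1 := mul_le_mul_of_nonneg_left hflat ht0
    _ < 1 := by linarith
  obtain ⟨σ, hσa, hσb⟩ := exists_perm_two hab hij
  have := hB.2.2.2 _ hsB (fun _ => 1) (fun _ => Or.inl rfl) σ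
  convert this using 1
  funext i
  simp only [one_mul, Pi.smul_apply, Pi.add_apply, smul_eq_mul]
  have h1 : (Pi.single i₀ (1:ℝ) : Fin n → ℝ) (σ i) = (Pi.single a (1:ℝ) : Fin n → ℝ) i := by
    rw [Pi.single_apply, Pi.single_apply]
    congr 1
    simp only [eq_iff_iff]
    constructor
    · intro h; exact σ.injective (h.trans hσa.symm)
    · intro h; subst h; exact hσa
  have h2 : (Pi.single j₀ (1:ℝ) : Fin n → ℝ) (σ i) = (Pi.single b (1:ℝ) : Fin n → ℝ) i := by
    rw [Pi.single_apply, Pi.single_apply]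
    congr 1
    simp only [eq_iff_iff]
    constructor
    · intro h; exact σ.injective (h.trans hσb.symm)
    · intro h; subst h; exact hσb
  rw [h1, h2]

end Main

set_option maxHeartbeats 2000000 in
theorem statement_5 (n : ℕ) (hn : 2 ≤ n) (B : Set (Fin n → ℝ)) (hB : IsSymBody n B)
    (hnorm : ∀ i, gauge B (Pi.single i (1 : ℝ)) = 1)
    (hdist : gauge B (∑ i, Pi.single i (1 : ℝ)) < 2)
    (hcube : B ≠ Set.Icc (fun _ => (-1 : ℝ)) (fun _ => 1)) :
    (∀ x ∈ frontier B, ∃ y : Fin n → ℝ,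
        (((∀ i, y i = 1 ∨ y i = -1) ∧ ∃ i : Fin n, (i : ℕ) < n - 1 ∧ y i = -1) ∨
          y = ∑ i ∈ Finset.univ.filter (fun i : Fin n => (i : ℕ) < n - 1), Pi.single i (1 : ℝ)) ∧
        Illuminates y x B) ∨
    (∀ i j : Fin n, i ≠ j →
        gauge B (Pi.single i (1 : ℝ)) < gauge B (Pi.single i (1 : ℝ) + Pi.single j (1 : ℝ))) := by
  classical
  by_cases hflat2 : ∀ i j : Fin n, i ≠ j →
      gauge B (Pi.single i (1 : ℝ)) < gauge B (Pi.single i (1 : ℝ) + Pi.single j (1 : ℝ))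
  · exact Or.inr hflat2
  push_neg at hflat2
  obtain ⟨i₀, j₀, hij, hle⟩ := hflat2
  rw [hnorm i₀] at hle
  left
  intro x hxfr
  have hxB : x ∈ B := hB.1.isClosed.frontier_subset hxfr
  have habs : ∀ i, |x i| ≤ 1 := fun i => symBody_abs_le_one hB hnorm hxB i
  have hn1 : n - 1 < n := by omega
  set nn : Fin n := ⟨n - 1, hn1⟩ with hnn
  have hdico : ∀ i : Fin n, (i : ℕ) < n - 1 ∨ i = nn := by
    intro i
    rcases lt_or_ge (i : ℕ) (n - 1) with h | h
    · exact Or.inl h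
    · right
      apply Fin.ext
      have := i.isLt
      simp only [hnn]
      omega
  obtain ⟨t, ht2, ht1, htB⟩ := symBody_ones_mem hB hdist
  have habsB : (fun i => |x i|) ∈ B := symBody_mem_of_abs_le_s5 hB hxB (fun i => by simp)
  by_cases hsign : ∃ i : Fin n, (i : ℕ) < n - 1 ∧ 0 ≤ x i
  · -- Case B : flip all coordinates towards 0
    obtain ⟨iw, hiwT, hiw⟩ := hsign
    have hune : (Finset.univ : Finset (Fin n)).Nonempty := ⟨nn, Finset.mem_univ _⟩
    set ε₀ := Finset.univ.inf' hune (fun i => if x i = 0 then 1 else |x i|) with hε₀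
    have hε₀pos : 0 < ε₀ := by
      rw [hε₀, Finset.lt_inf'_iff]
      intro i _
      by_cases h : x i = 0 <;> simp [h, abs_pos]
    have hε₀le : ∀ i, x i ≠ 0 → ε₀ ≤ |x i| := by
      intro i h
      have h2 := Finset.inf'_le (f := fun i => if x i = 0 then 1 else |x i|)
        (Finset.mem_univ i)
      rwa [if_neg h] at h2
    set ε := min ε₀ 1 / 4 with hε
    have hεpos : 0 < ε := by
      have : 0 < min ε₀ 1 := lt_min hε₀pos one_pos
      rw [hε]; linarith
    have hε14 : ε ≤ 1 / 4 := by
      have : min ε₀ 1 ≤ 1 := min_le_right _ _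
      rw [hε]; linarith
    have hεlt : ∀ i, x i ≠ 0 → ε < |x i| := by
      intro i h
      have h1 := hε₀le i h
      have h2 : min ε₀ 1 ≤ ε₀ := min_le_left _ _
      rw [hε]; linarith
    set y : Fin n → ℝ := fun i => if x i < 0 then 1 else -1 with hy
    refine ⟨y, Or.inl ⟨fun i => ?_, iw, hiwT, ?_⟩, ε, hεpos, ?_⟩
    · by_cases h : x i < 0 <;> simp [hy, h]
    · simp [hy, not_lt.mpr hiw]
    · set w : Fin n → ℝ := fun i => (1 - 2 * ε) * |x i| + 2 * ε * t with hw
      have hwB : w ∈ B := by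
        have h2 := hB.2.1 habsB htB (by linarith : (0:ℝ) ≤ 1 - 2 * ε)
          (by linarith : (0:ℝ) ≤ 2 * ε) (by ring)
        have heq : w = (1 - 2*ε) • (fun i => |x i|) + (2*ε) • (fun _ => t : Fin n → ℝ) := by
          funext i
          simp [hw, smul_eq_mul]
        rw [heq]
        exact h2
      apply symBody_mem_interior_of_abs_lt hB hwB
      intro i
      have hzi : (x + ε • y) i = x i + ε * y i := by simp
      rw [hzi]
      have habsi := habs i
      rcases lt_trichotomy (x i) 0 with hneg | hzero | hpos
      · have hyi : y i = 1 := by simp [hy, hneg]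
        have hlt := hεlt i (ne_of_lt hneg)
        rw [abs_of_neg hneg] at hlt habsi
        rw [hyi, mul_one, abs_of_neg (by linarith : x i + ε < 0), hw]
        simp only
        rw [abs_of_neg hneg]
        nlinarith
      · have hyi : y i = -1 := by simp [hy, hzero, lt_irrefl]
        rw [hyi, hzero, hw]
        simp only
        rw [hzero, abs_zero]
        rw [abs_of_neg (by linarith : (0:ℝ) + ε * (-1) < 0)]
        nlinarith
      · have hyi : y i = -1 := by simp [hy, not_lt.mpr hpos.le]
        have hlt := hεlt i (ne_of_gt hpos)
        rw [abs_of_pos hpos] at hlt habsi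
        rw [hyi, abs_of_pos (by linarith : 0 < x i + ε * (-1)), hw]
        simp only
        rw [abs_of_pos hpos]
        nlinarith
  · push_neg at hsign
    have hTne : ((Finset.univ.filter (fun i : Fin n => (i : ℕ) < n - 1)) :
        Finset (Fin n)).Nonempty := by
      refine ⟨⟨0, by omega⟩, ?_⟩
      simp only [Finset.mem_filter, Finset.mem_univ, true_and]
      omega
    by_cases hbn : |x nn| < 1
    · -- Case C1 : special direction
      set m := (Finset.univ.filter (fun i : Fin n => (i : ℕ) < n - 1)).inf' hTne
        (fun i => |x i|) with hm
      have hmpos : 0 < m := by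
        rw [hm, Finset.lt_inf'_iff]
        intro i hi
        rw [Finset.mem_filter] at hi
        exact abs_pos.mpr (ne_of_lt (hsign i hi.2))
      have hmle : ∀ i : Fin n, (i : ℕ) < n - 1 → m ≤ |x i| := fun i h =>
        Finset.inf'_le _ (by rw [Finset.mem_filter]; exact ⟨Finset.mem_univ _, h⟩)
      have hm1 : m ≤ 1 := le_trans (hmle ⟨0, by omega⟩ (by simp; omega)) (habs _)
      set b := |x nn| with hb
      have hb0 : 0 ≤ b := abs_nonneg _
      set d : Fin n → ℝ :=
        ∑ i ∈ Finset.univ.filter (fun i : Fin n => (i : ℕ) < n - 1), Pi.single i (1:ℝ) with hd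
      have hdapp : ∀ i : Fin n, d i = if (i : ℕ) < n - 1 then (1:ℝ) else 0 := by
        intro i
        rw [hd, Finset.sum_apply]
        rw [Finset.sum_congr rfl (fun j _ => Pi.single_apply j (1:ℝ) i)]
        rw [Finset.sum_ite_eq]
        simp
      refine ⟨d, Or.inr rfl, m / 2, by linarith, ?_⟩
      set s := m / 4 with hs
      set t₃ := (1 + b) / 2 with ht₃
      have husB : (t₃ • (Pi.single nn (1:ℝ) : Fin n → ℝ)) ∈ B := by
        apply symBody_mem_of_gauge_lt_one hB
        rw [gauge_smul_of_nonneg (by linarith : (0:ℝ) ≤ t₃), hnorm nn, smul_eq_mul, mul_one]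
        rw [ht₃]; linarith
      set w : Fin n → ℝ := fun i => (1 - s) * |x i| + s * (t₃ * ((Pi.single nn (1:ℝ) : Fin n → ℝ) i)) with hw
      have hwB : w ∈ B := by
        have h2 := hB.2.1 habsB husB (by rw [hs]; linarith : (0:ℝ) ≤ 1 - s)
          (by rw [hs]; linarith : (0:ℝ) ≤ s) (by ring)
        have heq : w = (1 - s) • (fun i => |x i|) + s • (t₃ • (Pi.single nn (1:ℝ) : Fin n → ℝ)) := by
          funext i
          simp [hw, smul_eq_mul, mul_assoc]
        rw [heq]
        exact h2
      apply symBody_mem_interior_of_abs_lt hB hwB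
      intro i
      have hzi : (x + (m / 2) • d) i = x i + (m / 2) * d i := by simp
      rw [hzi]
      have habsi := habs i
      rcases hdico i with hiT | hinn
      · have hdi : d i = 1 := by rw [hdapp i, if_pos hiT]
        have hine : i ≠ nn := by
          intro h
          rw [h, hnn] at hiT
          simp at hiT
        have hsingle : (Pi.single nn (1:ℝ) : Fin n → ℝ) i = 0 := by
          rw [Pi.single_apply, if_neg hine]
        have hxi : x i < 0 := hsign i hiT
        have hmlei := hmle i hiT
        rw [abs_of_neg hxi] at hmlei habsi
        rw [hdi, mul_one]
        have hv : x i + m / 2 < 0 := by linarith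
        rw [abs_of_neg hv]
        simp only [hw, hsingle, mul_zero, add_zero]
        rw [abs_of_neg hxi]
        nlinarith
      · have hnlt : ¬((i : ℕ) < n - 1) := by rw [hinn, hnn]; simp
        have hdnn : d i = 0 := by rw [hdapp, if_neg hnlt]
        rw [hdnn, mul_zero, add_zero]
        simp only [hw]
        have hsingle1 : (Pi.single nn (1:ℝ) : Fin n → ℝ) i = 1 := by
          rw [hinn, Pi.single_eq_same]
        rw [hsingle1, mul_one]
        have hbb : |x i| = b := by rw [hinn]
        rw [hbb, hs, ht₃]
        nlinarith
    · -- |x nn| = 1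
      have hbn1 : |x nn| = 1 := le_antisymm (habs nn) (not_lt.mp hbn)
      by_cases hsmall : ∃ j : Fin n, (j : ℕ) < n - 1 ∧ |x j| < 1
      · -- Case C2
        obtain ⟨j, hjmem, hjmin⟩ := Finset.exists_min_image
          (Finset.univ.filter (fun i : Fin n => (i : ℕ) < n - 1)) (fun i => |x i|) hTne
        have hjT : (j : ℕ) < n - 1 := (Finset.mem_filter.mp hjmem).2
        have hmle : ∀ i : Fin n, (i : ℕ) < n - 1 → |x j| ≤ |x i| := fun i h =>
          hjmin i (Finset.mem_filter.mpr ⟨Finset.mem_univ _, h⟩)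
        obtain ⟨m, hm⟩ : ∃ e : ℝ, e = |x j| := ⟨_, rfl⟩
        have hm0 : 0 < m := hm ▸ abs_pos.mpr (ne_of_lt (hsign j hjT))
        have hm1 : m < 1 := by
          obtain ⟨j', hj'T, hj'⟩ := hsmall
          rw [hm]
          exact lt_of_le_of_lt (hmle j' hj'T) hj'
        obtain ⟨ε, hε⟩ : ∃ e : ℝ, e = min (m / 2) ((1 - m) / 8) := ⟨_, rfl⟩
        have hεpos : 0 < ε := hε ▸ lt_min (by linarith) (by linarith)
        have hεm : ε ≤ m / 2 := hε ▸ min_le_left _ _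
        have hεm8 : ε ≤ (1 - m) / 8 := hε ▸ min_le_right _ _
        obtain ⟨τ, hτ⟩ : ∃ e : ℝ, e = ε / 2 := ⟨_, rfl⟩
        obtain ⟨t₂, ht₂⟩ : ∃ e : ℝ, e = (3 + m) / 4 := ⟨_, rfl⟩
        obtain ⟨α, hα⟩ : ∃ e : ℝ, e = ε * (3 + m) / (4 * (1 - m)) := ⟨_, rfl⟩
        obtain ⟨γ, hγ⟩ : ∃ e : ℝ, e = 1 - α - τ := ⟨_, rfl⟩
        have h1m : (0:ℝ) < 1 - m := by linarith
        have hαval : α * (1 - m) = ε * (3 + m) / 4 := by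
          rw [hα]
          field_simp
        have hα0 : 0 ≤ α := by
          rw [hα]
          exact div_nonneg (mul_nonneg hεpos.le (by linarith)) (by linarith)
        have hα8 : α ≤ 1 / 8 := by
          rw [hα, div_le_iff₀ (by linarith : (0:ℝ) < 4 * (1 - m))]
          have ha1 : ε * (3 + m) ≤ ε * 4 :=
            mul_le_mul_of_nonneg_left (by linarith) hεpos.le
          linarith
        have hτ0 : 0 ≤ τ := by rw [hτ]; linarith
        have hτ16 : τ ≤ 1 / 16 := by rw [hτ]; linarith
        have hγ0 : 0 ≤ γ := by rw [hγ]; linarith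
        have hjnn : j ≠ nn := by
          intro h
          rw [h, hnn] at hjT
          simp at hjT
        have ht₂0 : 0 ≤ t₂ := by rw [ht₂]; linarith
        have ht₂1 : t₂ < 1 := by rw [ht₂]; linarith
        have huB : (t₂ • ((Pi.single j 1 : Fin n → ℝ) + Pi.single nn 1)) ∈ B :=
          symBody_flat_mem hB hij hle hjnn ht₂0 ht₂1
        have hpB : (fun i => |x ((Equiv.swap j nn) i)|) ∈ B := by
          have h2 := hB.2.2.2 _ habsB (fun _ => 1) (fun _ => Or.inl rfl) (Equiv.swap j nn)
          convert h2 using 1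
          funext i
          simp
        set y : Fin n → ℝ := fun i => if i = j then -1
          else if i = nn then (if 0 < x nn then -1 else 1) else 1 with hy
        refine ⟨y, Or.inl ⟨fun i => ?_, j, hjT, ?_⟩, ε, hεpos, ?_⟩
        · by_cases h1 : i = j
          · right; rw [hy]; simp only; rw [if_pos h1]
          · by_cases h2 : i = nn
            · by_cases h3 : 0 < x nn
              · right; rw [hy]; simp only; rw [if_neg h1, if_pos h2, if_pos h3]
              · left; rw [hy]; simp only; rw [if_neg h1, if_pos h2, if_neg h3]
            · left; rw [hy]; simp only; rw [if_neg h1, if_neg h2]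
        · rw [hy]; simp
        · set sv : Fin n → ℝ := (Pi.single j 1 : Fin n → ℝ) + Pi.single nn 1 with hsv
          have hsvj : sv j = 1 := by
            rw [hsv]
            simp only [Pi.add_apply, Pi.single_eq_same, Pi.single_apply]
            rw [if_neg (fun hh => hjnn hh)]
            norm_num
          have hsvnn : sv nn = 1 := by
            rw [hsv]
            simp only [Pi.add_apply, Pi.single_eq_same, Pi.single_apply]
            rw [if_neg (fun hh => hjnn hh.symm)]
            norm_num
          have hsvo : ∀ i : Fin n, i ≠ j → i ≠ nn → sv i = 0 := by
            intro i hi1 hi2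
            rw [hsv]
            simp only [Pi.add_apply, Pi.single_apply]
            rw [if_neg hi1, if_neg hi2]
            norm_num
          set w : Fin n → ℝ := fun i => α * |x ((Equiv.swap j nn) i)| + γ * |x i| +
              τ * (t₂ * sv i) with hw
          have hwB : w ∈ B := by
            have h3 := hB.2.1.sum_mem (t := (Finset.univ : Finset (Fin 3)))
              (w := ![α, γ, τ])
              (z := ![(fun i => |x ((Equiv.swap j nn) i)|), (fun i => |x i|), t₂ • sv])
              (by
                intro i _
                fin_cases i
                · simpa using hα0
                · simpa using hγ0
                · simpa using hτ0)
              (by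
                rw [Fin.sum_univ_three]
                simp only [Matrix.cons_val_zero, Matrix.cons_val_one, Matrix.head_cons,
                  Matrix.cons_val_two, Matrix.tail_cons]
                rw [hγ]
                ring)
              (by
                intro i _
                fin_cases i
                · simpa using hpB
                · simpa using habsB
                · simpa using huB)
            rw [Fin.sum_univ_three] at h3
            simp only [Matrix.cons_val_zero, Matrix.cons_val_one, Matrix.head_cons,
              Matrix.cons_val_two, Matrix.tail_cons] at h3
            have heq : w = α • (fun i => |x ((Equiv.swap j nn) i)|) + γ • (fun i => |x i|) +
                τ • (t₂ • sv) := by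
              funext i
              simp only [hw, Pi.add_apply, Pi.smul_apply, smul_eq_mul]
            rw [heq]
            exact h3
          apply symBody_mem_interior_of_abs_lt hB hwB
          intro i
          have hzi : (x + ε • y) i = x i + ε * y i := by simp
          rw [hzi]
          by_cases h1 : i = j
          · have hyi : y i = -1 := by rw [hy]; simp only; rw [if_pos h1]
            have hxj : x i < 0 := by rw [h1]; exact hsign j hjT
            have hmi : |x i| = m := by rw [h1, hm]
            rw [hyi]
            have hv : x i + ε * (-1) < 0 := by nlinarith
            rw [abs_of_neg hv]
            simp only [hw]
            have e1 : (Equiv.swap j nn) i = nn := by rw [h1]; exact Equiv.swap_apply_left _ _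
            have e2 : sv i = 1 := by rw [h1]; exact hsvj
            rw [e1, e2, hbn1, mul_one, hmi]
            have hmx : -(x i) = m := by rw [← hmi, abs_of_neg hxj]
            rw [hτ, ht₂] at *
            nlinarith [hαval, mul_pos hεpos h1m]
          · by_cases h2 : i = nn
            · have hinej : i ≠ j := h1
              have hyi : y i = (if 0 < x nn then -1 else (1:ℝ)) := by
                rw [hy]; simp only; rw [if_neg h1, if_pos h2]
              have hxnn := (abs_eq (zero_le_one)).mp hbn1
              have hε12 : ε < 1 / 2 := by linarith
              have hval : |x i + ε * y i| = 1 - ε := by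
                rcases hxnn with h3 | h3
                · rw [hyi, if_pos (by rw [h3]; norm_num), h2, h3]
                  rw [abs_of_nonneg (by linarith)]
                  ring
                · rw [hyi, if_neg (by rw [h3]; norm_num), h2, h3]
                  rw [abs_of_nonpos (by linarith)]
                  ring
              rw [hval]
              simp only [hw]
              have e1 : (Equiv.swap j nn) i = j := by rw [h2]; exact Equiv.swap_apply_right _ _
              have e2 : sv i = 1 := by rw [h2]; exact hsvnn
              have e3 : |x i| = 1 := by rw [h2, hbn1]
              rw [e1, e2, e3, mul_one, mul_one, ← hm]
              rw [hτ, ht₂] at *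
              nlinarith [hαval, mul_pos hεpos h1m]
            · have hiT : (i : ℕ) < n - 1 := by
                rcases hdico i with h | h
                · exact h
                · exact absurd h h2
              have hyi : y i = 1 := by
                rw [hy]; simp only; rw [if_neg h1, if_neg h2]
              have hxi : x i < 0 := hsign i hiT
              have hmlei := hmle i hiT
              rw [abs_of_neg hxi, ← hm] at hmlei
              have habsi := habs i
              rw [abs_of_neg hxi] at habsi
              rw [hyi, mul_one]
              have hv : x i + ε < 0 := by nlinarith
              rw [abs_of_neg hv]
              simp only [hw]
              have e1 : (Equiv.swap j nn) i = i := Equiv.swap_apply_of_ne_of_ne h1 h2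
              have e2 : sv i = 0 := hsvo i h1 h2
              rw [e1, e2, mul_zero, mul_zero, add_zero, abs_of_neg hxi]
              rw [hτ] at *
              nlinarith
      · -- Case A : B is the cube, contradiction
        push_neg at hsmall
        exfalso
        apply hcube
        have hall : ∀ i, |x i| = 1 := by
          intro i
          rcases hdico i with h | h
          · exact le_antisymm (habs i) (hsmall i h)
          · rw [h]; exact hbn1
        ext v
        constructor
        · intro hv
          rw [Set.mem_Icc]
          constructor <;> intro i
          · exact (abs_le.mp (symBody_abs_le_one hB hnorm hv i)).1
          · exact (abs_le.mp (symBody_abs_le_one hB hnorm hv i)).2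
        · intro hv
          rw [Set.mem_Icc] at hv
          refine symBody_mem_of_abs_le_s5 hB hxB (fun i => ?_)
          rw [hall i]
          exact abs_le.mpr ⟨hv.1 i, hv.2 i⟩
end

section
/- For natural numbers 1 ≤ k ≤ ⌈n/2⌉, the inequality C(n−k, k−1) / C(n, 2k−1) ≥ (4^k / (2n²)) · (1 − k/n)^{n−k} · (k/n)^k holds, where C denotes the binomial coefficient. -/
theorem statement_8 (n k : ℕ) (hn : 2 ≤ n) (hk : 1 ≤ k) (hk2 : k ≤ (n + 1) / 2) :
    (4 : ℝ) ^ k / (2 * (n : ℝ) ^ 2) * (1 - (k : ℝ) / n) ^ (n - k) * ((k : ℝ) / n) ^ k ≤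
      ((n - k).choose (k - 1) : ℝ) / (n.choose (2 * k - 1) : ℝ) := by
  have h2k : 2 * k - 1 ≤ n := by omega
  have hkn : k ≤ n := by omega
  -- identity
  have hid : n.choose (2 * k - 1) * (2 * k - 1).choose k = n.choose k * (n - k).choose (k - 1) := by
    have := Nat.choose_mul (n := n) (k := 2 * k - 1) (s := k) (by omega)
    rw [this]
    congr 2 <;> omega
  -- entropy bound
  have hent : k ^ k * (n - k) ^ (n - k) * n.choose k ≤ n ^ n := by
    have h := add_pow k (n - k) n
    have hsum : k ^ k * (n - k) ^ (n - k) * n.choose k ≤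
        ∑ i ∈ Finset.range (n + 1), k ^ i * (n - k) ^ (n - i) * n.choose i := by
      exact Finset.single_le_sum (f := fun i => k ^ i * (n - k) ^ (n - i) * n.choose i)
        (fun i _ => Nat.zero_le _) (Finset.mem_range.mpr (by omega))
    calc k ^ k * (n - k) ^ (n - k) * n.choose k ≤ _ := hsum
      _ = (k + (n - k)) ^ n := h.symm
      _ = n ^ n := by rw [Nat.add_sub_cancel' hkn]
  -- central binomial bound
  have hcb : 4 ^ k ≤ 2 * n ^ 2 * (2 * k - 1).choose k := by
    have h1 : 4 ^ k ≤ 2 * k * Nat.centralBinom k :=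
      Nat.four_pow_le_two_mul_self_mul_centralBinom k hk
    have hsymm : (2 * k - 1).choose (k - 1) = (2 * k - 1).choose k := by
      have h := Nat.choose_symm (n := 2 * k - 1) (k := k) (by omega)
      have e : 2 * k - 1 - k = k - 1 := by omega
      rw [e] at h
      exact h
    have e1 : (2 * k).choose k = (2 * k - 1).choose (k - 1) + (2 * k - 1).choose k := by
      obtain ⟨m, rfl⟩ : ∃ m, k = m + 1 := ⟨k - 1, by omega⟩
      simp only [show 2 * (m + 1) - 1 = 2 * m + 1 from by omega,
        show m + 1 - 1 = m from by omega,
        show 2 * (m + 1) = (2 * m + 1) + 1 from by omega]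
      exact Nat.choose_succ_succ (2 * m + 1) m
    have h2 : Nat.centralBinom k = 2 * (2 * k - 1).choose k := by
      unfold Nat.centralBinom
      omega
    calc 4 ^ k ≤ 2 * k * Nat.centralBinom k := h1
      _ = 4 * k * (2 * k - 1).choose k := by rw [h2]; ring
      _ ≤ 2 * n ^ 2 * (2 * k - 1).choose k := by
          apply Nat.mul_le_mul_right
          nlinarith [hk2, hn, Nat.div_le_self (n+1) 2]
  -- main nat inequality
  have hmain : 4 ^ k * ((n - k) ^ (n - k) * k ^ k * n.choose k) ≤
      2 * n ^ 2 * (2 * k - 1).choose k * n ^ n := by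
    calc 4 ^ k * ((n - k) ^ (n - k) * k ^ k * n.choose k) ≤ 4 ^ k * n ^ n := by
          apply Nat.mul_le_mul_left
          calc (n - k) ^ (n - k) * k ^ k * n.choose k
              = k ^ k * (n - k) ^ (n - k) * n.choose k := by ring
            _ ≤ n ^ n := hent
      _ ≤ 2 * n ^ 2 * (2 * k - 1).choose k * n ^ n := Nat.mul_le_mul_right _ hcb
  -- now move to reals
  have hN : (0 : ℝ) < n := by positivity
  have hC2 : (0 : ℝ) < (n.choose (2 * k - 1) : ℝ) := by
    exact_mod_cast Nat.choose_pos h2k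
  have hCnk : (0 : ℝ) < (n.choose k : ℝ) := by exact_mod_cast Nat.choose_pos hkn
  have hcastnk : ((n - k : ℕ) : ℝ) = (n : ℝ) - k := by
    push_cast [hkn]; ring
  have hlhs : (4 : ℝ) ^ k / (2 * (n : ℝ) ^ 2) * (1 - (k : ℝ) / n) ^ (n - k) * ((k : ℝ) / n) ^ k
      = (4 : ℝ) ^ k * ((n : ℝ) - k) ^ (n - k) * (k : ℝ) ^ k /
        (2 * (n : ℝ) ^ 2 * (n : ℝ) ^ (n - k) * (n : ℝ) ^ k) := by
    have h1k : (1 - (k : ℝ) / n) = ((n : ℝ) - k) / n := by field_simp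
    rw [h1k, div_pow, div_pow]
    field_simp
    try ring
  rw [hlhs, div_le_div_iff₀ (by positivity) hC2]
  -- reduce to nat inequality times identity
  have hidR : ((n.choose (2 * k - 1) : ℝ)) * ((2 * k - 1).choose k : ℝ)
      = (n.choose k : ℝ) * ((n - k).choose (k - 1) : ℝ) := by exact_mod_cast hid
  have hmainR : (4 : ℝ) ^ k * (((n - k : ℕ) : ℝ) ^ (n - k) * (k : ℝ) ^ k * (n.choose k : ℝ)) ≤
      2 * (n : ℝ) ^ 2 * ((2 * k - 1).choose k : ℝ) * (n : ℝ) ^ n := by exact_mod_cast hmain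
  rw [hcastnk] at hmainR
  -- multiply both sides by n.choose k
  rw [← mul_le_mul_iff_left₀ hCnk]
  have hnn : (n : ℝ) ^ n = (n : ℝ) ^ (n - k) * (n : ℝ) ^ k := by
    rw [← pow_add]; congr 1; omega
  calc (4 : ℝ) ^ k * ((n : ℝ) - k) ^ (n - k) * (k : ℝ) ^ k * (n.choose (2 * k - 1) : ℝ) * (n.choose k : ℝ)
      = ((4 : ℝ) ^ k * (((n : ℝ) - k) ^ (n - k) * (k : ℝ) ^ k * (n.choose k : ℝ))) * (n.choose (2 * k - 1) : ℝ) := by ring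
    _ ≤ (2 * (n : ℝ) ^ 2 * ((2 * k - 1).choose k : ℝ) * (n : ℝ) ^ n) * (n.choose (2 * k - 1) : ℝ) := by
        apply mul_le_mul_of_nonneg_right _ hC2.le
        exact hmainR
    _ = ((n.choose (2 * k - 1) : ℝ) * ((2 * k - 1).choose k : ℝ)) * (2 * (n : ℝ) ^ 2 * (n : ℝ) ^ n) := by ring
    _ = ((n.choose k : ℝ) * ((n - k).choose (k - 1) : ℝ)) * (2 * (n : ℝ) ^ 2 * (n : ℝ) ^ n) := by rw [hidR]
    _ = ((n - k).choose (k - 1) : ℝ) * (2 * (n : ℝ) ^ 2 * (n : ℝ) ^ (n - k) * (n : ℝ) ^ k) * (n.choose k : ℝ) := by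
        rw [hnn]; ring
end

section
/- There is a universal constant C such that for n ≥ C and any natural k ≤ ⌈n/2⌉ the following holds: with X¹, X², … i.i.d. uniform ±1 random vectors in ℝⁿ and P₁, P₂, … i.i.d. uniform random coordinate projections of rank 2k−1, all jointly independent, the event that for every y ∈ {−1,0,1}ⁿ with exactly k nonzero coordinates there exists ℓ ≤ 2ⁿ/n² with Pₗ(y) = y and Xᵢˡ = yᵢ for all i in the support of y, has probability at least 1 − exp(−2n). -/
open Finset



private lemma count_pi {β : Type*} [Fintype β] {Ln : ℕ} (p : β → Prop) [DecidablePred p] :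
    ((Finset.univ : Finset (Fin Ln → β)).filter fun ω => ∀ ℓ, p (ω ℓ)).card
      = ((Finset.univ : Finset β).filter p).card ^ Ln := by
  classical
  rw [← Fintype.card_subtype, ← Fintype.card_subtype]
  rw [Fintype.card_congr (Equiv.subtypePiEquivPi (p := fun _ : Fin Ln => p))]
  simp

private lemma count_pi' {β : Type*} [Fintype β] [DecidableEq β] {Ln : ℕ} (s : Finset β) :
    ((Finset.univ : Finset (Fin Ln → β)).filter fun ω => ∀ ℓ, ω ℓ ∈ s).card
      = s.card ^ Ln := by
  rw [count_pi (fun a => a ∈ s), Finset.filter_univ_mem]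

private lemma count_superset {n m : ℕ} (T : Finset (Fin n)) (hm : T.card ≤ m) :
    ((Finset.univ : Finset (Finset (Fin n))).filter fun S => T ⊆ S ∧ S.card = m).card
      = (n - T.card).choose (m - T.card) := by
  classical
  have h1 : ((Finset.univ : Finset (Finset (Fin n))).filter fun S => T ⊆ S ∧ S.card = m).card
      = (Finset.powersetCard (m - T.card) Tᶜ).card := by
    apply Finset.card_nbij' (fun S => S \ T) (fun U => U ∪ T)
    · intro S hS
      simp only [Finset.mem_coe, Finset.mem_filter, Finset.mem_univ, true_and] at hS
      rw [Finset.mem_coe, Finset.mem_powersetCard]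
      refine ⟨fun i hi => ?_, by rw [Finset.card_sdiff_of_subset hS.1, hS.2]⟩
      simp only [Finset.mem_sdiff] at hi
      simpa [Finset.mem_compl] using hi.2
    · intro U hU
      rw [Finset.mem_coe, Finset.mem_powersetCard] at hU
      have hdisj : Disjoint U T := Finset.disjoint_left.mpr fun a ha hT => by
        have := hU.1 ha; simp only [Finset.mem_compl] at this; exact this hT
      simp only [Finset.mem_coe, Finset.mem_filter, Finset.mem_univ, true_and]
      refine ⟨Finset.subset_union_right, ?_⟩
      rw [Finset.card_union_of_disjoint hdisj, hU.2]
      omega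
    · intro S hS
      simp only [Finset.mem_coe, Finset.mem_filter, Finset.mem_univ, true_and] at hS
      exact Finset.sdiff_union_of_subset hS.1
    · intro U hU
      rw [Finset.mem_coe, Finset.mem_powersetCard] at hU
      have hdisj : Disjoint U T := Finset.disjoint_left.mpr fun a ha hT => by
        have := hU.1 ha; simp only [Finset.mem_compl] at this; exact this hT
      beta_reduce
      rw [Finset.union_sdiff_distrib, Finset.sdiff_self, Finset.union_empty,
        Finset.sdiff_eq_self_of_disjoint hdisj]
  rw [h1, Finset.card_powersetCard, Finset.card_compl, Fintype.card_fin]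

private lemma count_agree {n : ℕ} (T : Finset (Fin n)) (ε : Fin n → Bool) :
    ((Finset.univ : Finset (Fin n → Bool)).filter fun b => ∀ i ∈ T, b i = ε i).card
      = 2 ^ (n - T.card) := by
  classical
  rw [← Fintype.card_subtype]
  have e : {b : Fin n → Bool // ∀ i ∈ T, b i = ε i} ≃ ({ i // i ∈ Tᶜ} → Bool) :=
    { toFun := fun b j => b.1 j.1
      invFun := fun c => ⟨fun i => if h : i ∈ T then ε i else c ⟨i, by simpa using h⟩,
        fun i hi => by simp [hi]⟩
      left_inv := fun b => by
        apply Subtype.ext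
        funext i
        by_cases h : i ∈ T
        · simp [h, (b.2 i h).symm]
        · simp [h]
      right_inv := fun c => by
        funext j
        have hj : j.1 ∉ T := Finset.mem_compl.mp j.2
        simp [hj] }
  rw [Fintype.card_congr e]
  simp [Finset.card_compl]

private lemma two_mul_sq_le {n : ℕ} (hn : 8 ≤ n) : 2 * n ^ 2 ≤ 2 ^ n := by
  induction n, hn using Nat.le_induction with
  | base => norm_num
  | succ n hn ih =>
    have h1 : 2 * (n + 1) ^ 2 ≤ 2 * (2 * n ^ 2) := by nlinarith
    calc 2 * (n + 1) ^ 2 ≤ 2 * (2 * n ^ 2) := h1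
      _ ≤ 2 * 2 ^ n := by omega
      _ = 2 ^ (n + 1) := by ring

private lemma key_pow {n : ℕ} (hn : 100 ≤ n) : 32 * n ^ 4 * 3 ^ n ≤ 4 ^ n := by
  induction n, hn using Nat.le_induction with
  | base => norm_num
  | succ n hn ih =>
    calc 32 * (n + 1) ^ 4 * 3 ^ (n + 1) = 3 * (32 * (n + 1) ^ 4) * 3 ^ n := by ring
      _ ≤ 4 * (32 * n ^ 4) * 3 ^ n := by
          have h1 : 100 * n ^ 3 ≤ n ^ 4 := by
            calc 100 * n ^ 3 ≤ n * n ^ 3 := Nat.mul_le_mul_right _ hn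
              _ = n ^ 4 := by ring
          have h2 : 100 * n ^ 2 ≤ n ^ 3 := by
            calc 100 * n ^ 2 ≤ n * n ^ 2 := Nat.mul_le_mul_right _ hn
              _ = n ^ 3 := by ring
          have h3 : 100 * n ≤ n ^ 2 := by
            calc 100 * n ≤ n * n := Nat.mul_le_mul_right _ hn
              _ = n ^ 2 := by ring
          have : 3 * (32 * (n + 1) ^ 4) ≤ 4 * (32 * n ^ 4) := by nlinarith [h1, h2, h3]
          exact Nat.mul_le_mul_right _ this
      _ = 4 * (32 * n ^ 4 * 3 ^ n) := by ring
      _ ≤ 4 * 4 ^ n := Nat.mul_le_mul_left _ ih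
      _ = 4 ^ (n + 1) := by ring

private lemma key_ineq {n k : ℕ} (hn : 100 ≤ n) (hk : 1 ≤ k) (hkn : 2 * k - 1 ≤ n) :
    4 * n * (2 ^ n * n.choose (2 * k - 1))
      ≤ (2 ^ (n - k) * (n - k).choose (k - 1)) * (2 ^ n / n ^ 2) := by
  have hkn' : k ≤ n := by omega
  set L := 2 ^ n / n ^ 2 with hL
  set a := n.choose (2 * k - 1) with ha
  set c := (2 * k - 1).choose k with hc
  set d := (n - k).choose (k - 1) with hd
  set e := n.choose k with he
  have hcpos : 0 < c := Nat.choose_pos (by omega)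
  have hdpos : 0 < d := Nat.choose_pos (by omega)
  -- F1 : a * c = e * d
  have F1 : a * c = e * d := by
    have := Nat.choose_mul (n := n) (k := 2 * k - 1) (s := k) (by omega)
    rw [show 2 * k - 1 - k = k - 1 by omega] at this
    exact this
  -- F2 : 4 ^ k ≤ 2 * (n + 2) * c
  have h2c : (2 * k).choose k = 2 * c := by
    have e1 : 2 * k - 1 + 1 = 2 * k := by omega
    have e2 : k - 1 + 1 = k := by omega
    have hsymm : (2 * k - 1).choose (k - 1) = c := by
      have := Nat.choose_symm (n := 2 * k - 1) (k := k) (by omega)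
      rw [show 2 * k - 1 - k = k - 1 by omega] at this
      exact this.symm ▸ rfl
    calc (2 * k).choose k = (2 * k - 1 + 1).choose (k - 1 + 1) := by rw [e1, e2]
      _ = (2 * k - 1).choose (k - 1) + (2 * k - 1).choose (k - 1 + 1) :=
          Nat.choose_succ_succ _ _
      _ = c + c := by rw [e2, hsymm]
      _ = 2 * c := by ring
  have F2 : 4 ^ k ≤ 2 * (n + 2) * c := by
    calc 4 ^ k ≤ (2 * k + 1) * (2 * k).choose k :=
          Nat.four_pow_le_two_mul_add_one_mul_central_binom k
      _ = (2 * k + 1) * 2 * c := by rw [h2c]; ring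
      _ ≤ (n + 2) * 2 * c := by
          have : 2 * k + 1 ≤ n + 2 := by omega
          exact Nat.mul_le_mul_right _ (Nat.mul_le_mul_right _ this)
      _ = 2 * (n + 2) * c := by ring
  -- F3 : 2 ^ (n - k) * e ≤ 3 ^ n
  have F3 : 2 ^ (n - k) * e ≤ 3 ^ n := by
    have hmem : n - k ∈ Finset.range (n + 1) := by simp
    have hterm : (2 : ℕ) ^ (n - k) * e = 2 ^ (n - k) * 1 ^ (n - (n - k)) * n.choose (n - k) := by
      rw [one_pow, mul_one, Nat.choose_symm hkn', he]
    calc 2 ^ (n - k) * e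
        = 2 ^ (n - k) * 1 ^ (n - (n - k)) * n.choose (n - k) := hterm
      _ ≤ ∑ m ∈ Finset.range (n + 1), 2 ^ m * 1 ^ (n - m) * n.choose m :=
          Finset.single_le_sum (f := fun m => 2 ^ m * 1 ^ (n - m) * n.choose m)
            (fun i _ => Nat.zero_le _) hmem
      _ = (2 + 1) ^ n := (add_pow 2 1 n).symm
      _ = 3 ^ n := by norm_num
  -- F4 : 2 ^ n ≤ 2 * n ^ 2 * L
  have hnpos : 0 < n ^ 2 := by positivity
  have hL1 : 1 ≤ L := by
    rw [hL, Nat.one_le_div_iff hnpos]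
    have := two_mul_sq_le (n := n) (by omega)
    omega
  have F4 : 2 ^ n ≤ 2 * n ^ 2 * L := by
    calc 2 ^ n = n ^ 2 * L + 2 ^ n % n ^ 2 := by rw [hL, Nat.div_add_mod]
      _ ≤ n ^ 2 * L + n ^ 2 := by
          have := Nat.mod_lt (2 ^ n) hnpos
          omega
      _ ≤ n ^ 2 * L + n ^ 2 * L := by
          have : n ^ 2 ≤ n ^ 2 * L := Nat.le_mul_of_pos_right _ hL1
          omega
      _ = 2 * n ^ 2 * L := by ring
  -- S6 : 8 * n * (n + 2) * 3 ^ n ≤ 2 ^ n * L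
  have S6 : 8 * n * (n + 2) * 3 ^ n ≤ 2 ^ n * L := by
    refine Nat.le_of_mul_le_mul_right ?_ (show 0 < 2 * n ^ 2 by positivity)
    calc 8 * n * (n + 2) * 3 ^ n * (2 * n ^ 2)
        = 16 * n ^ 3 * (n + 2) * 3 ^ n := by ring
      _ ≤ 16 * n ^ 3 * (2 * n) * 3 ^ n := by
          have h2 : n + 2 ≤ 2 * n := by omega
          exact Nat.mul_le_mul_right _ (Nat.mul_le_mul_left _ h2)
      _ = 32 * n ^ 4 * 3 ^ n := by ring
      _ ≤ 4 ^ n := key_pow hn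
      _ = 2 ^ n * 2 ^ n := by rw [show (4 : ℕ) = 2 * 2 from rfl, mul_pow]
      _ ≤ 2 ^ n * (2 * n ^ 2 * L) := Nat.mul_le_mul_left _ F4
      _ = 2 ^ n * L * (2 * n ^ 2) := by ring
  have h2n : (2 : ℕ) ^ n = 2 ^ (n - k) * 2 ^ k := by
    rw [← pow_add]; congr 1; omega
  -- S2 : 4 * n * 2 ^ n * e ≤ 2 ^ (n - k) * L * c
  have S2 : 4 * n * 2 ^ n * e ≤ 2 ^ (n - k) * L * c := by
    refine Nat.le_of_mul_le_mul_right ?_ (show 0 < 2 * (n + 2) by omega)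
    calc 4 * n * 2 ^ n * e * (2 * (n + 2))
        = 8 * n * (n + 2) * (2 ^ k * (2 ^ (n - k) * e)) := by rw [h2n]; ring
      _ ≤ 8 * n * (n + 2) * (2 ^ k * 3 ^ n) := by
          exact Nat.mul_le_mul_left _ (Nat.mul_le_mul_left _ F3)
      _ = 8 * n * (n + 2) * 3 ^ n * 2 ^ k := by ring
      _ ≤ 2 ^ n * L * 2 ^ k := Nat.mul_le_mul_right _ S6
      _ = 2 ^ (n - k) * L * (2 ^ k * 2 ^ k) := by rw [h2n]; ring
      _ = 2 ^ (n - k) * L * 4 ^ k := by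
          rw [show (4 : ℕ) = 2 * 2 from rfl, mul_pow]
      _ ≤ 2 ^ (n - k) * L * (2 * (n + 2) * c) := Nat.mul_le_mul_left _ F2
      _ = 2 ^ (n - k) * L * c * (2 * (n + 2)) := by ring
  -- conclude
  refine Nat.le_of_mul_le_mul_right ?_ hcpos
  calc 4 * n * (2 ^ n * a) * c = 4 * n * 2 ^ n * (a * c) := by ring
    _ = 4 * n * 2 ^ n * e * d := by rw [F1]; ring
    _ ≤ 2 ^ (n - k) * L * c * d := Nat.mul_le_mul_right _ S2
    _ = 2 ^ (n - k) * d * L * c := by ring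

open scoped Classical in
/-- With `⌊2^n/n^2⌋` jointly independent uniform ±1 sign vectors (`(ω ℓ).1`, with
`true ↦ 1`, `false ↦ -1`) and uniform random coordinate projections of rank `2k-1`
(encoded by their index sets `(ω ℓ).2`), the event that every `y ∈ {-1,0,1}ⁿ` with
exactly `k` nonzero coordinates is "hit" by some trial has probability at least
`1 - exp(-2n)`, where the probability is the uniform counting measure on all such
realizations `ω`. -/
theorem statement_11 :
    ∃ C : ℕ, ∀ n k : ℕ, C ≤ n → 1 ≤ k → k ≤ (n + 1) / 2 →
      let L := 2 ^ n / n ^ 2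
      let Ω := Finset.univ.filter
        (fun ω : Fin L → (Fin n → Bool) × Finset (Fin n) => ∀ ℓ, (ω ℓ).2.card = 2 * k - 1)
      let E := Ω.filter (fun ω => ∀ y : Fin n → ℝ,
        (∀ i, y i = -1 ∨ y i = 0 ∨ y i = 1) →
        (Finset.univ.filter fun i => y i ≠ 0).card = k →
        ∃ ℓ, (∀ i, y i ≠ 0 → i ∈ (ω ℓ).2) ∧
          ∀ i, y i ≠ 0 → (if (ω ℓ).1 i then (1 : ℝ) else -1) = y i)
      1 - Real.exp (-2 * n) ≤ (E.card : ℝ) / (Ω.card : ℝ) := by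
  classical
  use 100
  intro n k hn hk1 hk2
  intro L Ω E
  have hL : L = 2 ^ n / n ^ 2 := rfl
  have hkn : 2 * k - 1 ≤ n := by omega
  have hkn' : k ≤ n := by omega
  set M : ℕ := 2 ^ n * n.choose (2 * k - 1) with hM
  set hh : ℕ := 2 ^ (n - k) * (n - k).choose (k - 1) with hhh
  -- the per-coordinate sample space
  set A : Finset ((Fin n → Bool) × Finset (Fin n)) :=
    Finset.univ.filter (fun a => a.2.card = 2 * k - 1) with hA
  have hAcard : A.card = M := by
    rw [hA, ← Finset.univ_product_univ, Finset.filter_product_right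
      (fun S : Finset (Fin n) => S.card = 2 * k - 1), Finset.card_product]
    have h1 : (Finset.univ.filter fun S : Finset (Fin n) => S.card = 2 * k - 1)
        = Finset.powersetCard (2 * k - 1) Finset.univ := by
      rw [Finset.powersetCard_eq_filter, Finset.powerset_univ]
    rw [h1, Finset.card_powersetCard, Finset.card_univ, Finset.card_univ]
    simp [hM]
  have hMpos : 0 < M := by
    rw [hM]
    exact Nat.mul_pos (by positivity) (Nat.choose_pos hkn)
  -- support and sign pattern of y
  set Tf : (Fin n → ℝ) → Finset (Fin n) :=
    fun y => Finset.univ.filter (fun i => y i ≠ 0) with hTf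
  set εf : (Fin n → ℝ) → (Fin n → Bool) :=
    fun y i => if y i = 1 then true else false with hεf
  set Hf : (Fin n → ℝ) → Finset ((Fin n → Bool) × Finset (Fin n)) :=
    fun y => Finset.univ.filter
      (fun a => (∀ i ∈ Tf y, a.1 i = εf y i) ∧ (Tf y ⊆ a.2 ∧ a.2.card = 2 * k - 1)) with hHf
  have hHsub : ∀ y, Hf y ⊆ A := by
    intro y a ha
    rw [hHf] at ha
    simp only [Finset.mem_filter, Finset.mem_univ, true_and] at ha
    rw [hA]
    simp only [Finset.mem_filter, Finset.mem_univ, true_and]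
    exact ha.2.2
  have hHcard : ∀ (T : Finset (Fin n)) (ε : Fin n → Bool), T.card = k →
      (Finset.univ.filter
        (fun a : (Fin n → Bool) × Finset (Fin n) =>
          (∀ i ∈ T, a.1 i = ε i) ∧ (T ⊆ a.2 ∧ a.2.card = 2 * k - 1))).card = hh := by
    intro T ε hT
    have hsplit : (Finset.univ.filter
        (fun a : (Fin n → Bool) × Finset (Fin n) =>
          (∀ i ∈ T, a.1 i = ε i) ∧ (T ⊆ a.2 ∧ a.2.card = 2 * k - 1)))
        = (Finset.univ.filter (fun b : Fin n → Bool => ∀ i ∈ T, b i = ε i)) ×ˢ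
          (Finset.univ.filter (fun S : Finset (Fin n) => T ⊆ S ∧ S.card = 2 * k - 1)) := by
      ext ⟨b, S⟩
      simp only [Finset.mem_filter, Finset.mem_univ, true_and, Finset.mem_product]
    rw [hsplit, Finset.card_product, count_agree, count_superset T (by omega), hT, hhh]
    congr 1
    congr 1
    omega
  -- the bad event for a given y
  set Bad : (Fin n → ℝ) → Finset (Fin L → (Fin n → Bool) × Finset (Fin n)) :=
    fun y => Finset.univ.filter
      (fun ω => (Tf y).card = k ∧ ∀ ℓ, ω ℓ ∈ A \ Hf y) with hBadDef
  have hBadCard : ∀ y, (Bad y).card ≤ (M - hh) ^ L := by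
    intro y
    by_cases hTy : (Tf y).card = k
    · have hBeq : Bad y = Finset.univ.filter
          (fun ω : Fin L → (Fin n → Bool) × Finset (Fin n) => ∀ ℓ, ω ℓ ∈ A \ Hf y) := by
        rw [hBadDef]
        apply Finset.filter_congr
        intro ω _
        simp [hTy]
      rw [hBeq, count_pi' (A \ Hf y)]
      rw [Finset.card_sdiff_of_subset (hHsub y)]
      rw [hAcard]
      have : (Hf y).card = hh := hHcard (Tf y) (εf y) hTy
      rw [this]
    · have : Bad y = ∅ := by
        rw [hBadDef, Finset.filter_eq_empty_iff]
        intro ω _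
        exact fun h => hTy h.1
      simp [this]
  -- the collection of candidate y's
  set Y : Finset (Fin n → ℝ) :=
    Finset.univ.image (fun f : Fin n → Fin 3 => fun i => ((f i : ℕ) : ℝ) - 1) with hY
  have hYcard : Y.card ≤ 3 ^ n := by
    refine le_trans Finset.card_image_le ?_
    simp
  -- coverage
  have hEsub : E ⊆ Ω := Finset.filter_subset _ _
  have cover : Ω \ E ⊆ Y.biUnion Bad := by
    intro ω hω
    rw [Finset.mem_sdiff] at hω
    obtain ⟨hωΩ, hωE⟩ := hω
    have hωΩ' : ∀ ℓ, (ω ℓ).2.card = 2 * k - 1 := (Finset.mem_filter.mp hωΩ).2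
    have hnP : ¬ (∀ y : Fin n → ℝ,
        (∀ i, y i = -1 ∨ y i = 0 ∨ y i = 1) →
        (Finset.univ.filter fun i => y i ≠ 0).card = k →
        ∃ ℓ, (∀ i, y i ≠ 0 → i ∈ (ω ℓ).2) ∧
          ∀ i, y i ≠ 0 → (if (ω ℓ).1 i then (1 : ℝ) else -1) = y i) :=
      fun hP => hωE (Finset.mem_filter.mpr ⟨hωΩ, hP⟩)
    obtain ⟨y, hy⟩ := not_forall.mp hnP
    obtain ⟨hy1, hy'⟩ := Classical.not_imp.mp hy
    obtain ⟨hy2, hy3⟩ := Classical.not_imp.mp hy'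
    rw [not_exists] at hy3
    have hmemT : ∀ i, i ∈ Tf y ↔ y i ≠ 0 := by
      intro i; rw [hTf]; simp
    refine Finset.mem_biUnion.mpr ⟨y, ?_, ?_⟩
    · rw [hY]
      refine Finset.mem_image.mpr
        ⟨fun i => if y i = -1 then 0 else if y i = 0 then 1 else 2, Finset.mem_univ _, ?_⟩
      funext i
      rcases hy1 i with h | h | h
      · norm_num [h]
      · norm_num [h]
      · norm_num [h]
    · rw [hBadDef]
      refine Finset.mem_filter.mpr ⟨Finset.mem_univ _, ?_, ?_⟩
      · rw [hTf]; exact hy2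
      · intro ℓ
        rw [Finset.mem_sdiff]
        constructor
        · rw [hA]; exact Finset.mem_filter.mpr ⟨Finset.mem_univ _, hωΩ' ℓ⟩
        · intro hmem
          rw [hHf] at hmem
          simp only [Finset.mem_filter, Finset.mem_univ, true_and] at hmem
          obtain ⟨hb, hTsub, -⟩ := hmem
          refine hy3 ℓ ⟨?_, ?_⟩
          · intro i hi
            exact hTsub ((hmemT i).mpr hi)
          · intro i hi
            have hbi := hb i ((hmemT i).mpr hi)
            rcases hy1 i with h | h | h
            · have hε : εf y i = false := by
                rw [hεf]; simp only [h]; norm_num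
              rw [hbi, hε]
              simp [h]
            · exact absurd h hi
            · have hε : εf y i = true := by
                rw [hεf]; simp [h]
              rw [hbi, hε]
              simp [h]
  -- cardinalities
  have hΩcard : Ω.card = M ^ L := by
    have h0 : Ω = Finset.univ.filter
        (fun ω : Fin L → (Fin n → Bool) × Finset (Fin n) => ∀ ℓ, ω ℓ ∈ A) := by
      apply Finset.filter_congr
      intro ω _
      simp [hA]
    rw [h0, count_pi' A, hAcard]
  have hhM : hh ≤ M := by
    obtain ⟨T₀, -, hT₀⟩ := Finset.exists_subset_card_eq
      (s := (Finset.univ : Finset (Fin n))) (by simpa using hkn')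
    have := hHcard T₀ (fun _ => true) hT₀
    rw [← this, ← hAcard]
    apply Finset.card_le_card
    rw [hA]
    intro a ha
    simp only [Finset.mem_filter, Finset.mem_univ, true_and] at ha ⊢
    exact ha.2.2
  have cover2 : (Ω \ E).card ≤ 3 ^ n * (M - hh) ^ L := by
    calc (Ω \ E).card ≤ (Y.biUnion Bad).card := Finset.card_le_card cover
      _ ≤ ∑ y ∈ Y, (Bad y).card := Finset.card_biUnion_le
      _ ≤ ∑ _y ∈ Y, (M - hh) ^ L := Finset.sum_le_sum (fun y _ => hBadCard y)
      _ = Y.card * (M - hh) ^ L := by rw [Finset.sum_const, smul_eq_mul]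
      _ ≤ 3 ^ n * (M - hh) ^ L := Nat.mul_le_mul_right _ hYcard
  have hkey : 4 * n * M ≤ hh * L := by
    rw [hM, hhh, hL]
    exact key_ineq hn hk1 hkn
  -- pass to the reals
  have hMR : (0 : ℝ) < (M : ℝ) := by exact_mod_cast hMpos
  have hΩR : (0 : ℝ) < (Ω.card : ℝ) := by
    rw [hΩcard]
    exact_mod_cast pow_pos hMpos L
  have hcast : ((M - hh : ℕ) : ℝ) = (M : ℝ) - (hh : ℝ) := Nat.cast_sub hhM
  have hstep : ((M : ℝ) - hh) ≤ (M : ℝ) * Real.exp (-((hh : ℝ) / M)) := by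
    have h1 := Real.add_one_le_exp (-((hh : ℝ) / M))
    have h2 : (M : ℝ) - hh = M * (1 - (hh : ℝ) / M) := by field_simp
    rw [h2]
    have h3 : 1 - (hh : ℝ) / M ≤ Real.exp (-((hh : ℝ) / M)) := by linarith
    exact mul_le_mul_of_nonneg_left h3 hMR.le
  have hMhnn : (0 : ℝ) ≤ (M : ℝ) - hh := by
    have : (hh : ℝ) ≤ M := by exact_mod_cast hhM
    linarith
  have hpow : ((M : ℝ) - hh) ^ L ≤ (M : ℝ) ^ L * Real.exp (-(((hh : ℝ) / M) * L)) := by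
    calc ((M : ℝ) - hh) ^ L ≤ ((M : ℝ) * Real.exp (-((hh : ℝ) / M))) ^ L :=
          pow_le_pow_left₀ hMhnn hstep L
      _ = (M : ℝ) ^ L * Real.exp (-((hh : ℝ) / M)) ^ L := mul_pow _ _ _
      _ = (M : ℝ) ^ L * Real.exp (-(((hh : ℝ) / M) * L)) := by
          rw [← Real.exp_nat_mul]
          ring_nf
  have hexp4 : Real.exp (-(((hh : ℝ) / M) * L)) ≤ Real.exp (-(4 * n)) := by
    rw [Real.exp_le_exp]
    have hkeyR : (4 * n : ℝ) * M ≤ (hh : ℝ) * L := by exact_mod_cast hkey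
    have : (4 * n : ℝ) ≤ (hh : ℝ) / M * L := by
      rw [div_mul_eq_mul_div, le_div_iff₀ hMR]
      linarith
    linarith
  have h3n : (3 : ℝ) ^ n ≤ Real.exp (2 * n) := by
    have h3 : (3 : ℝ) ≤ Real.exp 2 := by
      rw [show (2 : ℝ) = 1 + 1 by norm_num, Real.exp_add]
      nlinarith [Real.exp_one_gt_d9]
    calc (3 : ℝ) ^ n ≤ (Real.exp 2) ^ n := pow_le_pow_left₀ (by norm_num) h3 n
      _ = Real.exp (2 * n) := by
          rw [← Real.exp_nat_mul]
          ring_nf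
  have main : ((Ω \ E).card : ℝ) ≤ Real.exp (-2 * n) * (Ω.card : ℝ) := by
    calc ((Ω \ E).card : ℝ) ≤ ((3 ^ n * (M - hh) ^ L : ℕ) : ℝ) := by exact_mod_cast cover2
      _ = (3 : ℝ) ^ n * ((M : ℝ) - hh) ^ L := by push_cast [hcast]; ring
      _ ≤ Real.exp (2 * n) * ((M : ℝ) ^ L * Real.exp (-(4 * n))) := by
          have h1 : ((M : ℝ) - hh) ^ L ≤ (M : ℝ) ^ L * Real.exp (-(4 * n)) := by
            calc ((M : ℝ) - hh) ^ L ≤ (M : ℝ) ^ L * Real.exp (-(((hh : ℝ) / M) * L)) := hpow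
              _ ≤ (M : ℝ) ^ L * Real.exp (-(4 * n)) := by
                  exact mul_le_mul_of_nonneg_left hexp4 (by positivity)
          exact mul_le_mul h3n h1 (by positivity) (Real.exp_nonneg _)
      _ = Real.exp (-2 * n) * (M : ℝ) ^ L := by
          rw [show Real.exp (2 * (n : ℝ)) * ((M : ℝ) ^ L * Real.exp (-(4 * n)))
              = (Real.exp (2 * (n : ℝ)) * Real.exp (-(4 * n))) * (M : ℝ) ^ L from by ring,
            ← Real.exp_add]
          congr 1
          · congr 1
            ring
      _ = Real.exp (-2 * n) * (Ω.card : ℝ) := by rw [hΩcard]; push_cast; ring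
  -- finish
  have hcards : ((Ω \ E).card : ℝ) = (Ω.card : ℝ) - (E.card : ℝ) := by
    rw [Finset.card_sdiff_of_subset hEsub]
    exact_mod_cast Nat.cast_sub (Finset.card_le_card hEsub)
  have hfrac : ((Ω \ E).card : ℝ) / (Ω.card : ℝ) ≤ Real.exp (-2 * n) :=
    (div_le_iff₀ hΩR).mpr main
  have hEq : (E.card : ℝ) / (Ω.card : ℝ) = 1 - ((Ω \ E).card : ℝ) / (Ω.card : ℝ) := by
    rw [hcards, sub_div, div_self (ne_of_gt hΩR)]
    ring
  rw [hEq]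
  linarith
end

section
/- Let B be a 1-symmetric convex body in ℝⁿ (n ≥ 2) with ‖e₁‖_B = 1 and ‖e₁+⋯+eₙ‖_B ≥ 2. If x ∈ ∂B satisfies |{i : |xᵢ| = ‖x‖_∞}| > ⌈n/2⌉, then ‖x‖_B > ‖x‖_∞; consequently every v in the Gauss image G(B,x) has at least two nonzero coordinates. -/
open scoped BigOperators Topology Pointwise

theorem statement_13 (n : ℕ) (hn : 2 ≤ n) (B : Set (Fin n → ℝ)) (hB : IsSymBody n B)
    (hnorm : gauge B (Pi.single (⟨0, by omega⟩ : Fin n) (1 : ℝ)) = 1)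
    (hdist : 2 ≤ gauge B (∑ i, Pi.single i (1 : ℝ)))
    (x : Fin n → ℝ) (hx : x ∈ frontier B)
    (hbig : (n + 1) / 2 < (Finset.univ.filter fun i => |x i| = ‖x‖).card) :
    ‖x‖ < gauge B x ∧
      ∀ v ∈ gaussImage B x, 2 ≤ (Finset.univ.filter fun i => v i ≠ 0).card := by
  obtain ⟨hcomp, hconv, ⟨p, hp⟩, hsym⟩ := hB
  haveI : NeZero n := ⟨by omega⟩
  have hclosed : IsClosed B := hcomp.isClosed
  have hpB : p ∈ B := interior_subset hp
  have hnegp : (fun i => (-1 : ℝ) * p ((1 : Equiv.Perm (Fin n)) i)) ∈ B :=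
    hsym p hpB (fun _ => -1) (fun _ => Or.inr rfl) 1
  have h0 : (0 : Fin n → ℝ) ∈ interior B := by
    have h := hconv.combo_interior_self_mem_interior hp hnegp
      (a := (1:ℝ)/2) (b := (1:ℝ)/2) (by norm_num) (by norm_num) (by norm_num)
    have he : ((1:ℝ)/2) • p + ((1:ℝ)/2) • (fun i => (-1 : ℝ) * p ((1 : Equiv.Perm (Fin n)) i))
        = (0 : Fin n → ℝ) := by
      funext i
      simp only [Pi.add_apply, Pi.smul_apply, smul_eq_mul, Equiv.Perm.one_apply, Pi.zero_apply]
      ring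
    rwa [he] at h
  have hnhds : B ∈ 𝓝 0 := mem_interior_iff_mem_nhds.mp h0
  have memB : ∀ y : Fin n → ℝ, gauge B y ≤ 1 → y ∈ B := fun y hy => by
    have h := (gauge_le_one_iff_mem_closure hconv hnhds).mp hy
    rwa [hclosed.closure_eq] at h
  have hflip : ∀ y ∈ B, ∀ ε : Fin n → ℝ, (∀ i, ε i = 1 ∨ ε i = -1) →
      (fun i => ε i * y i) ∈ B := fun y hy ε hε => by
    simpa using hsym y hy ε hε 1
  have hperm : ∀ y ∈ B, ∀ σ : Equiv.Perm (Fin n), (fun i => y (σ i)) ∈ B := by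
    intro y hy σ
    simpa using hsym y hy (fun _ => 1) (fun _ => Or.inl rfl) σ
  have habs : ∀ y ∈ B, (fun i => |y i|) ∈ B := by
    intro y hy
    have h := hflip y hy (fun i => if y i < 0 then -1 else 1)
      (fun i => by split <;> simp)
    have he : (fun i => |y i|) = fun i => (if y i < 0 then (-1:ℝ) else 1) * y i := by
      funext i
      by_cases h' : y i < 0
      · simp [h', abs_of_neg h']
      · simp [h', abs_of_nonneg (not_lt.mp h')]
    rwa [he]
  have hzero : ∀ y ∈ B, ∀ T : Finset (Fin n), (fun i => if i ∈ T then 0 else y i) ∈ B := by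
    intro y hy T
    induction T using Finset.induction_on with
    | empty => simpa using hy
    | @insert j T hj ih =>
      set w : Fin n → ℝ := fun i => if i ∈ T then 0 else y i with hw
      have hw' : (fun i => (if i = j then (-1:ℝ) else 1) * w i) ∈ B :=
        hflip w ih (fun i => if i = j then -1 else 1) (fun i => by split <;> simp)
      have hmem := hconv ih hw' (by norm_num : (0:ℝ) ≤ 1/2) (by norm_num : (0:ℝ) ≤ 1/2)
        (by norm_num)
      have he : (fun i => if i ∈ insert j T then 0 else y i)
          = ((1:ℝ)/2) • w + ((1:ℝ)/2) • (fun i => (if i = j then (-1:ℝ) else 1) * w i) := by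
        funext i
        simp only [Pi.add_apply, Pi.smul_apply, smul_eq_mul, Finset.mem_insert, hw]
        by_cases hij : i = j
        · subst hij
          simp [hj]
        · by_cases hiT : i ∈ T <;> simp [hij, hiT] <;> ring
      rw [he]
      exact hmem
  have hxB : x ∈ B := by
    have := hx.1
    rwa [hclosed.closure_eq] at this
  have hgx : gauge B x = 1 := (gauge_eq_one_iff_mem_frontier hconv hnhds).mpr hx
  set S : Finset (Fin n) := Finset.univ.filter (fun i => |x i| = ‖x‖) with hS
  have hnk : n < 2 * S.card := by omega
  have hkpos : 0 < S.card := by omega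
  -- the key estimate
  have hlt : ‖x‖ < 1 := by
    by_contra hge
    push_neg at hge
    have habsx := habs x hxB
    have hzB := hzero _ habsx (Finset.univ.filter (fun i => ¬ |x i| = ‖x‖))
    have hzeq : (fun i => if i ∈ Finset.univ.filter (fun i => ¬ |x i| = ‖x‖) then 0 else |x i|)
        = (fun i => if |x i| = ‖x‖ then ‖x‖ else 0) := by
      funext i
      by_cases h : |x i| = ‖x‖ <;> simp [h]
    rw [hzeq] at hzB
    set z : Fin n → ℝ := fun i => if |x i| = ‖x‖ then ‖x‖ else 0 with hz
    have hsumz : ∑ j, z j = S.card * ‖x‖ := by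
      rw [hz, hS]
      rw [← Finset.sum_filter]
      rw [Finset.sum_const, nsmul_eq_mul]
    have hwB : (∑ m : Fin n, ((n:ℝ)⁻¹) • (fun i => z ((Equiv.addLeft m) i))) ∈ B := by
      apply hconv.sum_mem
      · intro m _
        positivity
      · simp [Finset.card_univ]
      · intro m _
        exact hperm z hzB (Equiv.addLeft m)
    have hweq : (∑ m : Fin n, ((n:ℝ)⁻¹) • (fun i => z ((Equiv.addLeft m) i)))
        = fun _ : Fin n => (S.card * ‖x‖) / n := by
      funext i
      simp only [Finset.sum_apply, Pi.smul_apply, smul_eq_mul, Equiv.coe_addLeft]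
      rw [← Finset.mul_sum]
      have : ∑ m : Fin n, z (m + i) = ∑ j, z j :=
        Fintype.sum_equiv (Equiv.addRight i) _ _ (fun m => rfl)
      rw [this, hsumz]
      field_simp
    rw [hweq] at hwB
    set c : ℝ := S.card * ‖x‖ / n with hc
    have hnpos : (0:ℝ) < n := by positivity
    have hcpos : 0 < c := by
      rw [hc]
      have : (0:ℝ) < S.card := by exact_mod_cast hkpos
      have h1 : (0:ℝ) < ‖x‖ := lt_of_lt_of_le one_pos hge
      positivity
    have hones : (∑ i, Pi.single i (1:ℝ)) = (fun _ : Fin n => (1:ℝ)) := by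
      funext j
      simp [Finset.sum_apply, Pi.single_apply]
    have hmem1 : (fun _ : Fin n => (1:ℝ)) ∈ (c⁻¹ • B : Set (Fin n → ℝ)) := by
      refine ⟨fun _ => c, hwB, ?_⟩
      funext i
      simp only [Pi.smul_apply, smul_eq_mul]
      field_simp
    have hgauge1 : gauge B (fun _ : Fin n => (1:ℝ)) ≤ c⁻¹ :=
      gauge_le_of_mem (inv_nonneg.mpr hcpos.le) hmem1
    have hhalf : (1:ℝ)/2 < c := by
      rw [hc, lt_div_iff₀ hnpos]
      have h1 : (n:ℝ) < 2 * S.card := by exact_mod_cast hnk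
      have h2 : (1:ℝ) ≤ ‖x‖ := hge
      have h3 : (0:ℝ) < S.card := by exact_mod_cast hkpos
      nlinarith
    have hinv : c⁻¹ < 2 := by
      rw [inv_lt_comm₀ hcpos (by norm_num)]
      linarith
    rw [hones] at hdist
    linarith
  refine ⟨by rw [hgx]; exact hlt, ?_⟩
  intro v hv
  obtain ⟨hv1, hv2⟩ := hv
  by_contra hcard
  push_neg at hcard
  interval_cases h : (Finset.univ.filter fun i => v i ≠ 0).card
  · -- card = 0 : v = 0
    have hfe : (Finset.univ.filter fun i => v i ≠ 0) = ∅ := Finset.card_eq_zero.mp h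
    have hv0 : ∀ i, v i = 0 := by
      intro i
      by_contra hvi
      have : i ∈ (Finset.univ.filter fun i => v i ≠ 0) :=
        Finset.mem_filter.mpr ⟨Finset.mem_univ i, hvi⟩
      rw [hfe] at this
      exact absurd this (Finset.notMem_empty i)
    rw [Finset.sum_eq_zero (fun i _ => by rw [hv0 i]; ring)] at hv1
    norm_num at hv1
  · -- card = 1
    obtain ⟨j, hj⟩ := Finset.card_eq_one.mp h
    have hvj : v j ≠ 0 := by
      have : j ∈ (Finset.univ.filter fun i => v i ≠ 0) := by
        rw [hj]; exact Finset.mem_singleton_self j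
      exact (Finset.mem_filter.mp this).2
    have hvi : ∀ i, i ≠ j → v i = 0 := by
      intro i hij
      by_contra hvi
      have : i ∈ (Finset.univ.filter fun i => v i ≠ 0) :=
        Finset.mem_filter.mpr ⟨Finset.mem_univ i, hvi⟩
      rw [hj, Finset.mem_singleton] at this
      exact hij this
    have hsq : v j ^ 2 = 1 := by
      rw [← hv1, Finset.sum_eq_single j (fun i _ hij => by rw [hvi i hij]; ring)
        (fun hju => absurd (Finset.mem_univ j) hju)]
    have hvj1 : ∀ i : Fin n, v j = 1 ∨ v j = -1 := by
      intro _
      have hfac : (v j - 1) * (v j + 1) = 0 := by nlinarith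
      rcases mul_eq_zero.mp hfac with h' | h'
      · left; linarith
      · right; linarith
    set j0 : Fin n := (⟨0, by omega⟩ : Fin n) with hj0
    have hej0 : Pi.single j0 (1:ℝ) ∈ B := memB _ (le_of_eq hnorm)
    have hyB := hsym _ hej0 (fun _ => v j) hvj1 (Equiv.swap j0 j)
    have hle := hv2 _ hyB
    have hyj : v j * (Pi.single j0 (1:ℝ) : Fin n → ℝ) ((Equiv.swap j0 j) j) = v j := by
      rw [Equiv.swap_apply_right, Pi.single_eq_same, mul_one]
    rw [Finset.sum_eq_single j
      (fun i _ hij => by rw [hvi i hij]; ring)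
      (fun hju => absurd (Finset.mem_univ j) hju)] at hle
    rw [hyj] at hle
    have h1le : (1:ℝ) ≤ v j * x j := by nlinarith
    have habsj : |x j| ≤ ‖x‖ := by
      have := norm_le_pi_norm x j
      simpa [Real.norm_eq_abs] using this
    have : v j * x j ≤ |x j| := by
      rcases hvj1 j with h' | h'
      · rw [h', one_mul]; exact le_abs_self (x j)
      · rw [h', neg_one_mul]; exact neg_le_abs (x j)
    linarith
end

section
/- Let B be a 1-symmetric convex body in ℝⁿ, x ∈ ∂B, v ∈ G(B,x), and let J = {i : |xᵢ| = ‖x‖_∞}. Suppose y ∈ {−1,0,1}ⁿ satisfies yᵢ = −sign(xᵢ) for all i ∈ J and the support of y has cardinality at most 2|J| − 1. Then ⟨y, v⟩ < 0; hence x is illuminated in direction y. -/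
open scoped BigOperators

lemma gauss_sign {n : ℕ} {B : Set (Fin n → ℝ)} (hB : IsSymBody n B) {x v : Fin n → ℝ}
    (hxB : x ∈ B) (hv : v ∈ gaussImage B x) (j : Fin n) : 0 ≤ v j * x j := by
  have hmem := hB.2.2.2 x hxB (fun i => if i = j then -1 else 1)
    (fun i => by by_cases h : i = j <;> simp [h]) (Equiv.refl _)
  have h2 := hv.2 _ hmem
  rw [Finset.sum_eq_single j (fun i _ hi => by simp [hi]) (by simp)] at h2
  simp at h2
  nlinarith [h2]

lemma gauss_order {n : ℕ} {B : Set (Fin n → ℝ)} (hB : IsSymBody n B) {x v : Fin n → ℝ}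
    (hxB : x ∈ B) (hv : v ∈ gaussImage B x) {i j : Fin n} (hij : |x i| < |x j|) :
    |v i| ≤ |v j| := by
  have hne : i ≠ j := by rintro rfl; exact lt_irrefl _ hij
  set e1 : ℝ := if v i * x j < 0 then -1 else 1 with he1
  set e2 : ℝ := if v j * x i < 0 then -1 else 1 with he2
  have hmem := hB.2.2.2 x hxB (fun k => if k = i then e1 else if k = j then e2 else 1)
    (fun k => by
      by_cases h1 : k = i
      · simp only [if_pos h1, he1]; split <;> simp
      · by_cases h2 : k = j
        · simp only [if_neg h1, if_pos h2, he2]; split <;> simp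
        · simp [h1, h2]) (Equiv.swap i j)
  have h2 := hv.2 _ hmem
  have hsum : ∑ k, v k * ((if k = i then e1 else if k = j then e2 else 1) *
      x (Equiv.swap i j k) - x k) = v i * (e1 * x j - x i) + v j * (e2 * x i - x j) := by
    rw [← Finset.sum_subset (Finset.subset_univ {i, j}) (fun k _ hk => ?_)]
    · rw [Finset.sum_pair hne]
      simp [hne, hne.symm, Equiv.swap_apply_left, Equiv.swap_apply_right]
    · simp only [Finset.mem_insert, Finset.mem_singleton, not_or] at hk
      rw [Equiv.swap_apply_of_ne_of_ne hk.1 hk.2]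
      simp [hk.1, hk.2]
  simp only [hsum] at h2
  have ha1 : e1 * (v i * x j) = |v i| * |x j| := by
    rw [he1, ← abs_mul]; split
    · next h => rw [abs_of_neg h]; ring
    · next h => rw [abs_of_nonneg (not_lt.mp h)]; ring
  have ha2 : e2 * (v j * x i) = |v j| * |x i| := by
    rw [he2, ← abs_mul]; split
    · next h => rw [abs_of_neg h]; ring
    · next h => rw [abs_of_nonneg (not_lt.mp h)]; ring
  have hb1 : v i * x i ≤ |v i| * |x i| := by rw [← abs_mul]; exact le_abs_self _
  have hb2 : v j * x j ≤ |v j| * |x j| := by rw [← abs_mul]; exact le_abs_self _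
  have key : |v i| * (|x j| - |x i|) ≤ |v j| * (|x j| - |x i|) := by nlinarith
  exact le_of_mul_le_mul_right (by linarith [key]) (sub_pos.mpr hij)

theorem statement_14 (n : ℕ) (hn : 2 ≤ n) (B : Set (Fin n → ℝ)) (hB : IsSymBody n B)
    (x : Fin n → ℝ) (hx : x ∈ frontier B)
    (y : Fin n → ℝ) (hy : ∀ i, y i = -1 ∨ y i = 0 ∨ y i = 1)
    (hyJ : ∀ i, |x i| = ‖x‖ → y i = -Real.sign (x i))
    (hsupp : (Finset.univ.filter fun i => y i ≠ 0).card ≤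
      2 * (Finset.univ.filter fun i => |x i| = ‖x‖).card - 1)
    (hvJ : ∀ v ∈ gaussImage B x, ∃ j, |x j| = ‖x‖ ∧ v j ≠ 0) :
    (∀ v ∈ gaussImage B x, (∑ i, y i * v i) < 0) ∧ Illuminates y x B := by
  obtain ⟨hcomp, hconv, hint, hsym⟩ := id hB
  have hBclosed : IsClosed B := hcomp.isClosed
  have hxcl : x ∈ B := by
    have := frontier_subset_closure hx
    rwa [hBclosed.closure_eq] at this
  have hxnotint : x ∉ interior B := by
    have h := hx
    rw [frontier, Set.mem_diff] at h
    exact h.2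
  have hnegmem : ∀ z ∈ B, -z ∈ B := by
    intro z hz
    have h := hsym z hz (fun _ => -1) (fun _ => Or.inr rfl) (Equiv.refl _)
    have he : (fun i => (-1 : ℝ) * z ((Equiv.refl (Fin n)) i)) = -z := by
      funext i; simp
    rwa [he] at h
  obtain ⟨a, ha⟩ := hint
  have h0 : (0 : Fin n → ℝ) ∈ interior B := by
    have h := hconv.combo_interior_closure_mem_interior ha
      (subset_closure (hnegmem a (interior_subset ha)))
      (by norm_num : (0:ℝ) < 1/2) (by norm_num : (0:ℝ) ≤ 1/2) (by norm_num)
    have he : (1/2 : ℝ) • a + (1/2 : ℝ) • (-a) = (0 : Fin n → ℝ) := by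
      funext i; simp
    rwa [he] at h
  have hx0 : x ≠ 0 := fun h => hxnotint (h ▸ h0)
  have hxn : 0 < ‖x‖ := norm_pos_iff.mpr hx0
  have part1 : ∀ v ∈ gaussImage B x, (∑ i, y i * v i) < 0 := by
    intro v hv
    obtain ⟨j0, hj0x, hj0v⟩ := hvJ v hv
    set J := Finset.univ.filter (fun i => |x i| = ‖x‖) with hJ
    set S := Finset.univ.filter (fun i => y i ≠ 0) with hS
    have hj0J : j0 ∈ J := by simp [hJ, hj0x]
    have hJne : J.Nonempty := ⟨j0, hj0J⟩
    have hmemJ : ∀ j ∈ J, |x j| = ‖x‖ := fun j hj => (Finset.mem_filter.mp hj).2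
    have hxne : ∀ j ∈ J, x j ≠ 0 := by
      intro j hj h
      have := hmemJ j hj
      rw [h, abs_zero] at this
      linarith
    have hsignJ : ∀ j ∈ J, y j * v j = -|v j| := by
      intro j hj
      have hyj : y j = -Real.sign (x j) := hyJ j (hmemJ j hj)
      have hsv := gauss_sign hB hxcl hv j
      rcases (hxne j hj).lt_or_gt with hneg | hpos
      · rw [Real.sign_of_neg hneg] at hyj
        have hvj : v j ≤ 0 := by nlinarith
        rw [hyj, abs_of_nonpos hvj]; ring
      · rw [Real.sign_of_pos hpos] at hyj
        have hvj : 0 ≤ v j := by nlinarith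
        rw [hyj, abs_of_nonneg hvj]; ring
    have hJS : J ⊆ S := by
      intro j hj
      have hyj : y j = -Real.sign (x j) := hyJ j (hmemJ j hj)
      simp only [hS, Finset.mem_filter, Finset.mem_univ, true_and]
      rw [hyj, neg_ne_zero, Ne, Real.sign_eq_zero_iff]
      exact hxne j hj
    obtain ⟨j1, hj1J, hj1min⟩ := Finset.exists_min_image J (fun j => |v j|) hJne
    have hm0 : (0:ℝ) ≤ |v j1| := abs_nonneg _
    have hoff : ∀ i ∈ S \ J, y i * v i ≤ |v j1| := by
      intro i hi
      obtain ⟨hiS, hiJ⟩ := Finset.mem_sdiff.mp hi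
      have hix : |x i| < ‖x‖ := by
        refine lt_of_le_of_ne ?_ ?_
        · simpa [Real.norm_eq_abs] using norm_le_pi_norm x i
        · simpa [hJ] using hiJ
      have hord : |v i| ≤ |v j1| :=
        gauss_order hB hxcl hv (hix.trans_eq (hmemJ j1 hj1J).symm)
      calc y i * v i ≤ |y i * v i| := le_abs_self _
        _ = |y i| * |v i| := abs_mul _ _
        _ ≤ 1 * |v i| := by
            have hy1 : |y i| ≤ 1 := by rcases hy i with h|h|h <;> norm_num [h]
            exact mul_le_mul_of_nonneg_right hy1 (abs_nonneg _)
        _ = |v i| := one_mul _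
        _ ≤ |v j1| := hord
    have hJ1 : 1 ≤ J.card := Finset.card_pos.mpr hJne
    have hsd : (S \ J).card ≤ J.card - 1 := by
      rw [Finset.card_sdiff_of_subset hJS]
      have := Finset.card_le_card hJS
      omega
    have hsplit : ∑ i, y i * v i = (∑ i ∈ S \ J, y i * v i) + ∑ i ∈ J, y i * v i := by
      rw [Finset.sum_sdiff hJS]
      refine (Finset.sum_subset (Finset.subset_univ S) (fun i _ hi => ?_)).symm
      have : y i = 0 := by simpa [hS] using hi
      simp [this]
    have hJsum : ∑ i ∈ J, y i * v i = -∑ j ∈ J, |v j| := by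
      rw [← Finset.sum_neg_distrib]
      exact Finset.sum_congr rfl hsignJ
    have hoffsum : ∑ i ∈ S \ J, y i * v i ≤ ((J.card - 1 : ℕ) : ℝ) * |v j1| := by
      calc ∑ i ∈ S \ J, y i * v i ≤ (S \ J).card • |v j1| :=
            Finset.sum_le_card_nsmul _ _ _ hoff
        _ = ((S \ J).card : ℝ) * |v j1| := nsmul_eq_mul _ _
        _ ≤ ((J.card - 1 : ℕ) : ℝ) * |v j1| :=
            mul_le_mul_of_nonneg_right (Nat.cast_le.mpr hsd) hm0
    have hJlow : ((J.card - 1 : ℕ) : ℝ) * |v j1| + |v j0| ≤ ∑ j ∈ J, |v j| := by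
      rw [← Finset.add_sum_erase J _ hj0J]
      have h1 : ((J.card - 1 : ℕ) : ℝ) * |v j1| ≤ ∑ j ∈ J.erase j0, |v j| := by
        have := Finset.card_nsmul_le_sum (J.erase j0) (fun j => |v j|) (|v j1|)
          (fun j hj => hj1min j (Finset.mem_of_mem_erase hj))
        rwa [nsmul_eq_mul, Finset.card_erase_of_mem hj0J] at this
      linarith
    have hj0pos : 0 < |v j0| := abs_pos.mpr hj0v
    rw [hsplit, hJsum]
    linarith
  refine ⟨part1, ?_⟩
  by_contra hIll
  rw [Illuminates] at hIll
  push_neg at hIll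
  set T : Set (Fin n → ℝ) := {z | ∃ ε : ℝ, 0 < ε ∧ z = x + ε • y} with hT
  have hTconv : Convex ℝ T := by
    rintro z1 ⟨e1, he1, rfl⟩ z2 ⟨e2, he2, rfl⟩ p q hp hq hpq
    refine ⟨p * e1 + q * e2, ?_, ?_⟩
    · rcases eq_or_lt_of_le hp with h | h
      · have : q = 1 := by linarith
        rw [← h, this]; simpa using he2
      · nlinarith [mul_nonneg hq he2.le]
    · funext i
      simp only [Pi.add_apply, Pi.smul_apply, smul_eq_mul]
      linear_combination x i * hpq
  have hdisj : Disjoint (interior B) T := by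
    rw [Set.disjoint_left]
    rintro z hz ⟨e, he, rfl⟩
    exact hIll e he hz
  obtain ⟨f, u, hfu, hut⟩ := geometric_hahn_banach_open hconv.interior isOpen_interior hTconv hdisj
  have hfa : f a < u := hfu a ha
  have hfB : ∀ z ∈ B, f z ≤ u := by
    intro z hz
    by_contra h
    push_neg at h
    have hza : f a < f z := hfa.trans h
    set t : ℝ := (f z - u) / (f z - f a) with ht
    have ht0 : 0 < t := div_pos (by linarith) (by linarith)
    have ht1 : t < 1 := (div_lt_one (by linarith)).mpr (by linarith)
    have hp := hconv.combo_interior_closure_mem_interior ha (subset_closure hz)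
      ht0 (by linarith : (0:ℝ) ≤ 1 - t) (by ring)
    have hlt := hfu _ hp
    rw [map_add, map_smul, map_smul] at hlt
    simp only [smul_eq_mul] at hlt
    have htv : t * (f z - f a) = f z - u := by
      rw [ht, div_mul_cancel₀ _ (ne_of_gt (by linarith : (0:ℝ) < f z - f a))]
    nlinarith
  have hfxu : f x ≤ u := hfB x hxcl
  have hfy : 0 ≤ f y := by
    have h1 := hut _ ⟨1, one_pos, rfl⟩
    rw [map_add, map_smul] at h1
    simp only [one_smul, smul_eq_mul] at h1
    linarith
  have hufx : u ≤ f x := by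
    by_contra h
    push_neg at h
    set e : ℝ := (u - f x) / (2 * (f y + 1)) with he
    have hfy1 : (0:ℝ) < f y + 1 := by linarith
    have he0 : 0 < e := div_pos (by linarith) (by linarith)
    have h1 := hut _ ⟨e, he0, rfl⟩
    rw [map_add, map_smul] at h1
    simp only [smul_eq_mul] at h1
    have h2 : e * (f y + 1) = (u - f x) / 2 := by
      rw [he]; field_simp
    nlinarith
  set c : Fin n → ℝ := fun i => f (fun j => if i = j then (1:ℝ) else 0) with hc
  have hfz : ∀ z, f z = ∑ i, c i * z i := by
    intro z
    conv_lhs => rw [pi_eq_sum_univ z]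
    rw [map_sum]
    exact Finset.sum_congr rfl fun i _ => by rw [map_smul, smul_eq_mul, mul_comm]
  have hfne : ∃ i, c i ≠ 0 := by
    by_contra hall
    push_neg at hall
    have hf0 : ∀ z, f z = 0 := by
      intro z; rw [hfz]; simp [hall]
    have h1 := hut _ ⟨1, one_pos, rfl⟩
    rw [hf0] at h1
    rw [hf0] at hfa
    linarith
  obtain ⟨i0, hi0⟩ := hfne
  have hcsum : 0 < ∑ i, c i ^ 2 := by
    refine Finset.sum_pos' (fun i _ => sq_nonneg _) ⟨i0, Finset.mem_univ _, ?_⟩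
    rcases hi0.lt_or_gt with h | h <;> nlinarith
  set s : ℝ := Real.sqrt (∑ i, c i ^ 2) with hsq
  have hs0 : 0 < s := Real.sqrt_pos.mpr hcsum
  have hs2 : s ^ 2 = ∑ i, c i ^ 2 := Real.sq_sqrt hcsum.le
  set v : Fin n → ℝ := fun i => c i / s with hvdef
  have hvG : v ∈ gaussImage B x := by
    constructor
    · have : ∑ i, (c i / s) ^ 2 = (∑ i, c i ^ 2) / s ^ 2 := by
        rw [Finset.sum_div]
        exact Finset.sum_congr rfl fun i _ => div_pow _ _ _
      rw [hvdef] at *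
      rw [this, ← hs2, div_self (by positivity)]
    · intro z hz
      have hcalc : ∑ i, v i * (z i - x i) = (f z - f x) / s := by
        have h1 : ∑ i, v i * (z i - x i) = (∑ i, c i * (z i - x i)) / s := by
          rw [Finset.sum_div]
          exact Finset.sum_congr rfl fun i _ => by rw [hvdef]; ring
        rw [h1, hfz z, hfz x, ← Finset.sum_sub_distrib]
        congr 1
        exact Finset.sum_congr rfl fun i _ => by ring
      rw [hcalc]
      have := hfB z hz
      apply div_nonpos_of_nonpos_of_nonneg _ hs0.le
      linarith
  have hyv : ∑ i, y i * v i = f y / s := by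
    have h1 : ∑ i, y i * v i = (∑ i, c i * y i) / s := by
      rw [Finset.sum_div]
      exact Finset.sum_congr rfl fun i _ => by rw [hvdef]; ring
    rw [h1, hfz y]
  have hge : 0 ≤ ∑ i, y i * v i := by
    rw [hyv]
    exact div_nonneg hfy hs0.le
  linarith [part1 v hvG]
end

section
/- Let B be a 1-symmetric convex body in ℝⁿ (n ≥ 2) with ‖eᵢ‖_B = 1, and let x ∈ ∂B have all coordinates nonzero with |xₙ| ≤ |xᵢ| for all i. If v ∈ G(B,x) satisfies vᵢ = 0 for all i ≤ n−1, then |xₙ| ≥ 1; hence |xᵢ| ≥ 1 for all i, which forces B = [−1,1]ⁿ given B ⊆ [−1,1]ⁿ. -/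
open scoped BigOperators

theorem statement_18 (n : ℕ) (hn : 2 ≤ n) (B : Set (Fin n → ℝ)) (hB : IsSymBody n B)
    (hnorm : ∀ i, gauge B (Pi.single i (1 : ℝ)) = 1)
    (hsub : B ⊆ Set.Icc (fun _ => (-1 : ℝ)) (fun _ => 1))
    (x : Fin n → ℝ) (hx : x ∈ frontier B) (hx0 : ∀ i, x i ≠ 0)
    (hxn : ∀ i, |x ⟨n - 1, by omega⟩| ≤ |x i|)
    (v : Fin n → ℝ) (hv : v ∈ gaussImage B x)
    (hv0 : ∀ i : Fin n, (i : ℕ) < n - 1 → v i = 0) :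
    1 ≤ |x ⟨n - 1, by omega⟩| ∧ (∀ i, 1 ≤ |x i|) ∧
      B = Set.Icc (fun _ => (-1 : ℝ)) (fun _ => 1) := by
  obtain ⟨hcomp, hconv, hint, hsym⟩ := hB
  have hclosed : IsClosed B := hcomp.isClosed
  have hxB : x ∈ B := hclosed.frontier_subset hx
  -- B is symmetric under negation
  have hnegB : ∀ y ∈ B, -y ∈ B := by
    intro y hy
    have := hsym y hy (fun _ => -1) (fun _ => Or.inr rfl) (Equiv.refl _)
    convert this using 1
    funext i; simp
  -- 0 ∈ interior B
  have h0int : (0 : Fin n → ℝ) ∈ interior B := by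
    obtain ⟨z, hz⟩ := hint
    have hpre : (fun y : Fin n → ℝ => -y) ⁻¹' B = B := by
      ext y
      constructor
      · intro hy
        simpa using hnegB (-y) hy
      · intro hy
        exact hnegB y hy
    have hz' : -z ∈ interior B := by
      rw [mem_interior_iff_mem_nhds] at hz ⊢
      have hc : ContinuousAt (fun y : Fin n → ℝ => -y) (-z) := (continuous_neg).continuousAt
      have := hc.preimage_mem_nhds (by simpa using hz)
      rwa [hpre] at this
    have := hconv.interior hz hz' (by norm_num : (0:ℝ) ≤ 1/2)
      (by norm_num : (0:ℝ) ≤ 1/2) (by norm_num)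
    simpa using this
  have hnhds : B ∈ nhds (0 : Fin n → ℝ) :=
    mem_interior_iff_mem_nhds.mp (interior_mono Set.Subset.rfl h0int)
  -- unit vectors are in B
  have heB : ∀ i : Fin n, Pi.single i (1:ℝ) ∈ B := by
    intro i
    have : gauge B (Pi.single i (1:ℝ)) ≤ 1 := le_of_eq (hnorm i)
    have := (gauge_le_one_iff_mem_closure hconv hnhds).mp this
    rwa [hclosed.closure_eq] at this
  set N : Fin n := ⟨n - 1, by omega⟩ with hN
  -- v is supported at N
  have hvz : ∀ i : Fin n, i ≠ N → v i = 0 := by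
    intro i hi
    apply hv0
    have : (i : ℕ) ≠ n - 1 := fun h => hi (Fin.ext h)
    omega
  obtain ⟨hvnorm, hvsup⟩ := hv
  have hvN2 : v N ^ 2 = 1 := by
    rw [← hvnorm]
    rw [Finset.sum_eq_single N (fun i _ hi => by rw [hvz i hi]; ring) (by simp)]
  have hvNabs : |v N| = 1 := by
    have h : (v N - 1) * (v N + 1) = 0 := by nlinarith
    rcases mul_eq_zero.mp h with h | h
    · have : v N = 1 := by linarith
      simp [this]
    · have : v N = -1 := by linarith
      simp [this]
  -- normal inequality reduces to one term
  have hsup' : ∀ y ∈ B, v N * (y N - x N) ≤ 0 := by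
    intro y hy
    have := hvsup y hy
    rwa [Finset.sum_eq_single N (fun i _ hi => by rw [hvz i hi]; ring) (by simp)] at this
  have h1 : v N * (1 - x N) ≤ 0 := by
    have := hsup' (Pi.single N (1:ℝ)) (heB N)
    simpa using this
  have h2 : v N * (-1 - x N) ≤ 0 := by
    have := hsup' (-(Pi.single N (1:ℝ))) (hnegB _ (heB N))
    simpa using this
  have hxN1 : 1 ≤ |x N| := by
    have habs : |v N| ≤ v N * x N := by
      rcases abs_cases (v N) with ⟨h, _⟩ | ⟨h, _⟩
      · rw [h]; nlinarith
      · rw [h]; nlinarith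
    calc (1:ℝ) = |v N| := hvNabs.symm
      _ ≤ v N * x N := habs
      _ ≤ |v N * x N| := le_abs_self _
      _ = |v N| * |x N| := abs_mul _ _
      _ = |x N| := by rw [hvNabs, one_mul]
  have hall : ∀ i, 1 ≤ |x i| := fun i => le_trans hxN1 (hxn i)
  refine ⟨hxN1, hall, ?_⟩
  -- each x i is ±1
  have hxpm : ∀ i, x i = 1 ∨ x i = -1 := by
    intro i
    have hle := hsub hxB
    have h1 : x i ≤ 1 := hle.2 i
    have h2 : (-1:ℝ) ≤ x i := hle.1 i
    rcases abs_cases (x i) with ⟨h, _⟩ | ⟨h, _⟩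
    · left; have := hall i; rw [h] at this; linarith
    · right; have := hall i; rw [h] at this; linarith
  -- all sign vectors are in B
  have hsign : ∀ g : Fin n → ℝ, (∀ i, g i = 1 ∨ g i = -1) → g ∈ B := by
    intro g hg
    have hx2 : ∀ i, x i * x i = 1 := by
      intro i; rcases hxpm i with h | h <;> rw [h] <;> ring
    have hε : ∀ i, g i * x i = 1 ∨ g i * x i = -1 := by
      intro i
      rcases hg i with h | h <;> rcases hxpm i with h' | h' <;>
        simp [h, h']
    have := hsym x hxB (fun i => g i * x i) hε (Equiv.refl _)
    convert this using 1
    funext i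
    simp only [Equiv.refl_apply]
    rw [mul_assoc, hx2 i, mul_one]
  -- the cube is the convex hull of sign vectors
  apply le_antisymm hsub
  have hcube : Set.Icc (fun _ => (-1:ℝ)) (fun _ => (1:ℝ)) =
      convexHull ℝ (Set.pi Set.univ (fun _ : Fin n => ({-1, 1} : Set ℝ))) := by
    rw [convexHull_pi, ← Set.pi_univ_Icc]
    congr 1
    funext i
    rw [← segment_eq_Icc (by norm_num : (-1:ℝ) ≤ 1), convexHull_pair]
  rw [hcube]
  apply convexHull_min _ hconv
  intro g hg
  apply hsign
  intro i
  have := hg i (Set.mem_univ i)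
  rcases this with h | h
  · right; exact h
  · left; exact h
end
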